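/- arXiv:1611.04187 — 8 statements merged into one kernel-verified Lean document; each statement's English description precedes it below -/
import Mathlib

section
/- For every graph G with n vertices, the sum over all edges uv of 1/(d_u + d_v) is at most n/4. -/
open Finset Real

variable {V : Type*}

noncomputable def edgeSum (G : SimpleGraph V) [Fintype V] [DecidableRel G.Adj]
    (f : ℝ → ℝ → ℝ) (hf : ∀ a b, f a b = f b a) : ℝ :=
  ∑ e ∈ G.edgeFinset,
    Sym2.lift ⟨fun u v => f (G.degree u) (G.degree v), fun u v => hf _ _⟩ e

noncomputable def GA1 (G : SimpleGraph V) [Fintype V] [DecidableRel G.Adj] : ℝ :=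
  edgeSum G (fun x y => 2 * Real.sqrt (x * y) / (x + y))
    (fun a b => by (try dsimp only); rw [mul_comm a b, add_comm a b])

noncomputable def M1 (G : SimpleGraph V) [Fintype V] [DecidableRel G.Adj] : ℝ :=
  ∑ u : V, (G.degree u : ℝ) ^ 2

noncomputable def M2 (G : SimpleGraph V) [Fintype V] [DecidableRel G.Adj] : ℝ :=
  edgeSum G (fun x y => x * y) (fun a b => mul_comm a b)

noncomputable def randic (G : SimpleGraph V) [Fintype V] [DecidableRel G.Adj] : ℝ :=
  edgeSum G (fun x y => 1 / Real.sqrt (x * y)) (fun a b => by (try dsimp only); rw [mul_comm a b])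

noncomputable def genRandic (G : SimpleGraph V) [Fintype V] [DecidableRel G.Adj] (α : ℝ) : ℝ :=
  edgeSum G (fun x y => (x * y) ^ α) (fun a b => by (try dsimp only); rw [mul_comm a b])

noncomputable def modZagreb (G : SimpleGraph V) [Fintype V] [DecidableRel G.Adj] : ℝ :=
  edgeSum G (fun x y => 1 / (x * y)) (fun a b => by (try dsimp only); rw [mul_comm a b])

noncomputable def NKstar (G : SimpleGraph V) [Fintype V] [DecidableRel G.Adj] : ℝ :=
  ∏ e ∈ G.edgeFinset,
    Sym2.lift ⟨fun u v => ((G.degree u : ℝ) * (G.degree v : ℝ)), fun u v => mul_comm _ _⟩ e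

def GraphRegular (G : SimpleGraph V) [Fintype V] [DecidableRel G.Adj] : Prop :=
  ∃ k, G.IsRegularOfDegree k


lemma sum_lift_add (G : SimpleGraph V) [Fintype V] [DecidableRel G.Adj] (g : V → ℝ) :
    ∑ e ∈ G.edgeFinset, Sym2.lift ⟨fun u v => g u + g v, fun u v => add_comm _ _⟩ e
      = ∑ v, (G.degree v : ℝ) * g v := by
  classical
  have h1 : ∑ d : G.Dart, g d.fst = ∑ v, (G.degree v : ℝ) * g v := by
    rw [← Finset.sum_fiberwise_of_maps_to (fun d _ => Finset.mem_univ d.fst)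
      (fun d : G.Dart => g d.fst)]
    refine Finset.sum_congr rfl fun v _ => ?_
    rw [Finset.sum_congr rfl (fun d hd => by
      simp only [Finset.mem_filter] at hd; rw [hd.2]), Finset.sum_const, nsmul_eq_mul]
    congr 1
    exact_mod_cast G.dart_fst_fiber_card_eq_degree v
  have h2 : ∑ d : G.Dart, g d.fst =
      ∑ e ∈ G.edgeFinset, Sym2.lift ⟨fun u v => g u + g v, fun u v => add_comm _ _⟩ e := by
    rw [← Finset.sum_fiberwise_of_maps_to
      (fun d _ => SimpleGraph.mem_edgeFinset.mpr d.edge_mem)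
      (fun d : G.Dart => g d.fst)]
    refine Finset.sum_congr rfl fun e he => ?_
    rw [SimpleGraph.mem_edgeFinset] at he
    induction' e with u v
    have hadj : G.Adj u v := he
    set d : G.Dart := ⟨(u, v), hadj⟩ with hd
    have hf : Finset.univ.filter (fun d' : G.Dart => d'.edge = s(u, v)) = {d, d.symm} := by
      have := d.edge_fiber
      convert this
      rfl
    rw [hf, Finset.sum_pair d.symm_ne.symm]
    simp [d, SimpleGraph.Dart.symm]
  rw [← h2, h1]

theorem stmt1 (G : SimpleGraph V) [Fintype V] [DecidableRel G.Adj]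
    (hc : G.Connected) (hm : G.edgeFinset.Nonempty) :
    edgeSum G (fun x y => 1 / (x + y)) (fun a b => by (try dsimp only); rw [add_comm a b]) ≤
      (Fintype.card V : ℝ) / 4 := by
  classical
  set g : V → ℝ := fun v => 1 / (4 * (G.degree v : ℝ)) with hg
  have step1 : edgeSum G (fun x y => 1 / (x + y)) (fun a b => by (try dsimp only); rw [add_comm a b]) ≤
      ∑ e ∈ G.edgeFinset, Sym2.lift ⟨fun u v => g u + g v, fun u v => add_comm _ _⟩ e := by
    refine Finset.sum_le_sum fun e he => ?_
    rw [SimpleGraph.mem_edgeFinset] at he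
    induction' e with u v
    have hadj : G.Adj u v := he
    have hu : (0 : ℝ) < G.degree u := by
      exact_mod_cast (G.degree_pos_iff_exists_adj u).2 ⟨v, hadj⟩
    have hv : (0 : ℝ) < G.degree v := by
      exact_mod_cast (G.degree_pos_iff_exists_adj v).2 ⟨u, hadj.symm⟩
    simp only [Sym2.lift_mk, hg]
    rw [div_add_div _ _ (by positivity) (by positivity), div_le_div_iff₀ (by positivity) (by positivity)]
    nlinarith [sq_nonneg ((G.degree u : ℝ) - (G.degree v : ℝ))]
  refine step1.trans ?_
  rw [sum_lift_add]
  have : ∀ v : V, (G.degree v : ℝ) * g v ≤ 1 / 4 := by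
    intro v
    rcases eq_or_lt_of_le (Nat.zero_le (G.degree v)) with h | h
    · simp [hg, ← h]
    · have hd : (0 : ℝ) < G.degree v := by exact_mod_cast h
      rw [hg]
      rw [mul_one_div, mul_comm (4:ℝ), ← div_div]
      rw [div_self (ne_of_gt hd)]
    
  calc ∑ v, (G.degree v : ℝ) * g v ≤ ∑ _v : V, (1:ℝ)/4 := Finset.sum_le_sum fun v _ => this v
    _ = (Fintype.card V : ℝ) / 4 := by
      simp [Finset.card_univ, div_eq_mul_inv]
end

section
/- If 0 ≤ x' < x ≤ y, then 2√(x'y)/(x'+y) < 2√(xy)/(x+y). -/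
open Finset Real

variable {V : Type*}

theorem stmt6 (x' x y : ℝ) (h0 : 0 ≤ x') (h1 : x' < x) (h2 : x ≤ y) (hy : 0 < y) :
    2 * Real.sqrt (x' * y) / (x' + y) < 2 * Real.sqrt (x * y) / (x + y) := by
  have hx : 0 < x := lt_of_le_of_lt h0 h1
  have hd1 : 0 < x' + y := by linarith
  have hd2 : 0 < x + y := by linarith
  rw [div_lt_div_iff₀ hd1 hd2]
  set a := Real.sqrt (x' * y) with ha
  set b := Real.sqrt (x * y) with hb
  have hsa : a ^ 2 = x' * y := Real.sq_sqrt (by positivity)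
  have hsb : b ^ 2 = x * y := Real.sq_sqrt (by positivity)
  have hna : 0 ≤ a := Real.sqrt_nonneg _
  have hnb : 0 ≤ b := Real.sqrt_nonneg _
  have key : (a * (x + y)) ^ 2 < (b * (x' + y)) ^ 2 := by
    have h3 : x' * x < y ^ 2 := by nlinarith
    have h4 : x' * y * (x + y) ^ 2 < x * y * (x' + y) ^ 2 := by
      nlinarith [mul_pos (mul_pos hy (sub_pos.2 h1)) (sub_pos.2 h3)]
    calc (a * (x + y)) ^ 2 = x' * y * (x + y) ^ 2 := by rw [mul_pow, hsa]
      _ < x * y * (x' + y) ^ 2 := h4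
      _ = (b * (x' + y)) ^ 2 := by rw [mul_pow, hsb]
  have := lt_of_pow_lt_pow_left₀ 2 (by positivity) key
  nlinarith
end

section
/- For every graph G with m edges, GA₁(G)² ≥ ((Δ+δ)²·M₂(G) + 4Δ³δ·m(m−1))/(Δ²(Δ+δ)²), with equality if and only if G is regular. -/
open Finset Real

variable {V : Type*}

noncomputable def Ffun (G : SimpleGraph V) [Fintype V] [DecidableRel G.Adj] : Sym2 V → ℝ :=
  Sym2.lift ⟨fun u v => 2 * Real.sqrt ((G.degree u : ℝ) * (G.degree v : ℝ)) /
      ((G.degree u : ℝ) + (G.degree v : ℝ)),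
    fun a b => by dsimp only; rw [mul_comm ((G.degree a : ℝ)), add_comm ((G.degree a : ℝ))]⟩

noncomputable def gfun (G : SimpleGraph V) [Fintype V] [DecidableRel G.Adj] : Sym2 V → ℝ :=
  Sym2.lift ⟨fun u v => (G.degree u : ℝ) * (G.degree v : ℝ), fun a b => mul_comm _ _⟩

lemma GA1_eq (G : SimpleGraph V) [Fintype V] [DecidableRel G.Adj] :
    GA1 G = ∑ e ∈ G.edgeFinset, Ffun G e := rfl

lemma M2_eq (G : SimpleGraph V) [Fintype V] [DecidableRel G.Adj] :
    M2 G = ∑ e ∈ G.edgeFinset, gfun G e := rfl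

@[simp] lemma Ffun_mk (G : SimpleGraph V) [Fintype V] [DecidableRel G.Adj] (u v : V) :
    Ffun G s(u, v) = 2 * Real.sqrt ((G.degree u : ℝ) * (G.degree v : ℝ)) /
      ((G.degree u : ℝ) + (G.degree v : ℝ)) := rfl

@[simp] lemma gfun_mk (G : SimpleGraph V) [Fintype V] [DecidableRel G.Adj] (u v : V) :
    gfun G s(u, v) = (G.degree u : ℝ) * (G.degree v : ℝ) := rfl

set_option maxHeartbeats 1600000 in
theorem stmt7 (G : SimpleGraph V) [Fintype V] [DecidableRel G.Adj]
    (hc : G.Connected) (hm : G.edgeFinset.Nonempty) :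
    (((G.maxDegree : ℝ) + G.minDegree) ^ 2 * M2 G +
        4 * (G.maxDegree : ℝ) ^ 3 * (G.minDegree : ℝ) *
          ((G.edgeFinset.card : ℝ) * ((G.edgeFinset.card : ℝ) - 1))) /
      ((G.maxDegree : ℝ) ^ 2 * ((G.maxDegree : ℝ) + G.minDegree) ^ 2) ≤ (GA1 G) ^ 2 ∧
    ((GA1 G) ^ 2 =
      (((G.maxDegree : ℝ) + G.minDegree) ^ 2 * M2 G +
          4 * (G.maxDegree : ℝ) ^ 3 * (G.minDegree : ℝ) *
            ((G.edgeFinset.card : ℝ) * ((G.edgeFinset.card : ℝ) - 1))) /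
        ((G.maxDegree : ℝ) ^ 2 * ((G.maxDegree : ℝ) + G.minDegree) ^ 2) ↔ GraphRegular G) := by
  classical
  obtain ⟨e₀, he₀⟩ := hm
  obtain ⟨a, b, hab⟩ : ∃ a b : V, G.Adj a b := by
    revert he₀
    induction e₀ using Sym2.ind with
    | _ a b =>
      intro he₀
      exact ⟨a, b, by simpa [SimpleGraph.mem_edgeFinset] using he₀⟩
  have hV : Nonempty V := ⟨a⟩
  -- every vertex has a neighbor
  have hnbr : ∀ v : V, ∃ w : V, G.Adj v w := by
    intro v
    by_cases hva : v = a
    · exact ⟨b, hva ▸ hab⟩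
    · obtain ⟨p⟩ := hc.preconnected v a
      have hnil : ¬ p.Nil := SimpleGraph.Walk.not_nil_of_ne hva
      exact ⟨p.getVert 1, p.adj_snd hnil⟩
  have hdegpos : ∀ v : V, 1 ≤ G.degree v := fun v =>
    (G.degree_pos_iff_exists_adj v).mpr (hnbr v)
  have hmind : 1 ≤ G.minDegree := G.le_minDegree_of_forall_le_degree 1 hdegpos
  set D : ℝ := (G.maxDegree : ℝ) with hDdef
  set d : ℝ := (G.minDegree : ℝ) with hddef
  set m : ℝ := (G.edgeFinset.card : ℝ) with hmdef
  have hd1 : (1 : ℝ) ≤ d := by rw [hddef]; exact_mod_cast hmind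
  have hdD : d ≤ D := by
    rw [hddef, hDdef]
    exact_mod_cast le_trans (G.minDegree_le_degree a) (G.degree_le_maxDegree a)
  have hD0 : (0 : ℝ) < D := by linarith
  have hd0 : (0 : ℝ) < d := by linarith
  have hDd : (0 : ℝ) < D + d := by linarith
  have hdegb : ∀ v : V, d ≤ (G.degree v : ℝ) ∧ (G.degree v : ℝ) ≤ D := fun v =>
    ⟨by rw [hddef]; exact_mod_cast G.minDegree_le_degree v,
     by rw [hDdef]; exact_mod_cast G.degree_le_maxDegree v⟩
  -- per-pair key facts
  have key1 : ∀ u w : V,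
      gfun G s(u, w) / D ^ 2 ≤ (Ffun G s(u, w)) ^ 2 := by
    intro u w
    obtain ⟨hxd, hxD⟩ := hdegb u
    obtain ⟨hyd, hyD⟩ := hdegb w
    set x : ℝ := (G.degree u : ℝ)
    set y : ℝ := (G.degree w : ℝ)
    have hx0 : (0 : ℝ) < x := lt_of_lt_of_le hd0 hxd
    have hy0 : (0 : ℝ) < y := lt_of_lt_of_le hd0 hyd
    rw [Ffun_mk, gfun_mk]
    have hsq : (2 * Real.sqrt (x * y) / (x + y)) ^ 2 = 4 * (x * y) / (x + y) ^ 2 := by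
      rw [div_pow, mul_pow, Real.sq_sqrt (by positivity)]
      ring
    rw [hsq, div_le_div_iff₀ (by positivity) (by positivity)]
    nlinarith [mul_nonneg (mul_nonneg (mul_pos hx0 hy0).le
      (by linarith : (0:ℝ) ≤ 2 * D - (x + y))) (by linarith : (0:ℝ) ≤ 2 * D + (x + y))]
  have key2 : ∀ u w : V, 2 * Real.sqrt (D * d) / (D + d) ≤ Ffun G s(u, w) := by
    intro u w
    obtain ⟨hxd, hxD⟩ := hdegb u
    obtain ⟨hyd, hyD⟩ := hdegb w
    set x : ℝ := (G.degree u : ℝ)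
    set y : ℝ := (G.degree w : ℝ)
    have hx0 : (0 : ℝ) < x := lt_of_lt_of_le hd0 hxd
    have hy0 : (0 : ℝ) < y := lt_of_lt_of_le hd0 hyd
    have hxy0 : (0 : ℝ) < x + y := by linarith
    rw [Ffun_mk, div_le_div_iff₀ hDd hxy0]
    have hA : 0 ≤ D * y - d * x := by nlinarith
    have hB : 0 ≤ D * x - d * y := by nlinarith
    have key : D * d * (x + y) ^ 2 ≤ x * y * (D + d) ^ 2 := by
      nlinarith [mul_nonneg hA hB]
    have e1 : Real.sqrt (D * d) * (x + y) = Real.sqrt (D * d * (x + y) ^ 2) := by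
      rw [Real.sqrt_mul (show (0:ℝ) ≤ D * d by positivity) ((x + y) ^ 2),
        Real.sqrt_sq (by positivity)]
    have e2 : Real.sqrt (x * y) * (D + d) = Real.sqrt (x * y * (D + d) ^ 2) := by
      rw [Real.sqrt_mul (show (0:ℝ) ≤ x * y by positivity) ((D + d) ^ 2),
        Real.sqrt_sq (by positivity)]
    calc 2 * Real.sqrt (D * d) * (x + y) = 2 * Real.sqrt (D * d * (x + y) ^ 2) := by
          rw [mul_assoc, e1]
      _ ≤ 2 * Real.sqrt (x * y * (D + d) ^ 2) := by
          have := Real.sqrt_le_sqrt key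
          linarith
      _ = 2 * Real.sqrt (x * y) * (D + d) := by rw [← e2]; ring
  have h1 : ∀ e ∈ G.edgeFinset, gfun G e / D ^ 2 ≤ (Ffun G e) ^ 2 := by
    intro e
    induction e using Sym2.ind with
    | _ u w => exact fun _ => key1 u w
  have h2 : ∀ e ∈ G.edgeFinset, 2 * Real.sqrt (D * d) / (D + d) ≤ Ffun G e := by
    intro e
    induction e using Sym2.ind with
    | _ u w => exact fun _ => key2 u w
  have hc0 : (0 : ℝ) ≤ 2 * Real.sqrt (D * d) / (D + d) := by positivity
  have hcsq : (2 * Real.sqrt (D * d) / (D + d)) ^ 2 = 4 * (D * d) / (D + d) ^ 2 := by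
    rw [div_pow, mul_pow, Real.sq_sqrt (by positivity)]
    ring
  -- decomposition of the square of the sum
  have hdecomp : (GA1 G) ^ 2 = (∑ e ∈ G.edgeFinset, (Ffun G e) ^ 2) +
      ∑ p ∈ G.edgeFinset.offDiag, Ffun G p.1 * Ffun G p.2 := by
    rw [GA1_eq, sq, Finset.sum_mul_sum]
    rw [← Finset.sum_product' (f := fun i j => Ffun G i * Ffun G j)]
    rw [← Finset.diag_union_offDiag G.edgeFinset,
      Finset.sum_union (Finset.disjoint_diag_offDiag _), Finset.sum_diag]
    simp [sq]
  have hoffcard : ((G.edgeFinset.offDiag.card : ℝ)) = m * (m - 1) := by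
    rw [Finset.offDiag_card]
    have h1' : G.edgeFinset.card ≤ G.edgeFinset.card * G.edgeFinset.card :=
      Nat.le_mul_of_pos_left _ (Finset.card_pos.mpr ⟨e₀, he₀⟩)
    push_cast [Nat.cast_sub h1']
    ring
  have hcross : m * (m - 1) * (4 * (D * d) / (D + d) ^ 2) ≤
      ∑ p ∈ G.edgeFinset.offDiag, Ffun G p.1 * Ffun G p.2 := by
    have hterm : ∀ p ∈ G.edgeFinset.offDiag,
        (2 * Real.sqrt (D * d) / (D + d)) ^ 2 ≤ Ffun G p.1 * Ffun G p.2 := by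
      intro p hp
      obtain ⟨hp1, hp2, _⟩ := Finset.mem_offDiag.mp hp
      have := h2 p.1 hp1
      have := h2 p.2 hp2
      rw [sq]
      exact mul_le_mul ‹2 * Real.sqrt (D * d) / (D + d) ≤ Ffun G p.1›
        ‹2 * Real.sqrt (D * d) / (D + d) ≤ Ffun G p.2› hc0 (le_trans hc0 ‹_›)
    have := Finset.card_nsmul_le_sum G.edgeFinset.offDiag
      (fun p => Ffun G p.1 * Ffun G p.2) _ hterm
    rw [nsmul_eq_mul] at this
    calc m * (m - 1) * (4 * (D * d) / (D + d) ^ 2)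
        = (G.edgeFinset.offDiag.card : ℝ) * (2 * Real.sqrt (D * d) / (D + d)) ^ 2 := by
          rw [hoffcard, hcsq]
      _ ≤ _ := this
  have hsq_sum : M2 G / D ^ 2 ≤ ∑ e ∈ G.edgeFinset, (Ffun G e) ^ 2 := by
    rw [M2_eq, Finset.sum_div]
    exact Finset.sum_le_sum h1
  have hRHS : ((D + d) ^ 2 * M2 G + 4 * D ^ 3 * d * (m * (m - 1))) / (D ^ 2 * (D + d) ^ 2)
      = M2 G / D ^ 2 + m * (m - 1) * (4 * (D * d) / (D + d) ^ 2) := by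
    field_simp
  have hineq : ((D + d) ^ 2 * M2 G + 4 * D ^ 3 * d * (m * (m - 1))) /
      (D ^ 2 * (D + d) ^ 2) ≤ (GA1 G) ^ 2 := by
    rw [hRHS, hdecomp]
    linarith
  refine ⟨hineq, ?_, ?_⟩
  · -- equality → regular
    intro hEq
    have hsum_eq : (∑ e ∈ G.edgeFinset, gfun G e / D ^ 2) =
        ∑ e ∈ G.edgeFinset, (Ffun G e) ^ 2 := by
      have h3 : M2 G / D ^ 2 = ∑ e ∈ G.edgeFinset, gfun G e / D ^ 2 := by
        rw [M2_eq, Finset.sum_div]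
      have hG := hEq.trans hRHS
      rw [hdecomp, h3] at hG
      have hs' : (∑ e ∈ G.edgeFinset, gfun G e / D ^ 2) ≤
          ∑ e ∈ G.edgeFinset, (Ffun G e) ^ 2 := h3 ▸ hsq_sum
      linarith
    have hterm := (Finset.sum_eq_sum_iff_of_le h1).mp hsum_eq
    refine ⟨G.maxDegree, fun v => ?_⟩
    obtain ⟨w, hvw⟩ := hnbr v
    have hevw : s(v, w) ∈ G.edgeFinset := SimpleGraph.mem_edgeFinset.mpr hvw
    have heq := hterm _ hevw
    rw [Ffun_mk, gfun_mk] at heq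
    obtain ⟨hxd, hxD⟩ := hdegb v
    obtain ⟨hyd, hyD⟩ := hdegb w
    set x : ℝ := (G.degree v : ℝ)
    set y : ℝ := (G.degree w : ℝ)
    have hx0 : (0 : ℝ) < x := lt_of_lt_of_le hd0 hxd
    have hy0 : (0 : ℝ) < y := lt_of_lt_of_le hd0 hyd
    have hsq : (2 * Real.sqrt (x * y) / (x + y)) ^ 2 = 4 * (x * y) / (x + y) ^ 2 := by
      rw [div_pow, mul_pow, Real.sq_sqrt (by positivity)]
      ring
    rw [hsq] at heq
    have hxy0 : (0 : ℝ) < x * y := mul_pos hx0 hy0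
    rw [div_eq_div_iff (by positivity) (by positivity)] at heq
    have h5 : (x + y - 2 * D) * (x + y + 2 * D) = 0 := by
      have h6 : x * y * ((x + y - 2 * D) * (x + y + 2 * D)) = 0 := by
        linear_combination heq
      rcases mul_eq_zero.mp h6 with h | h
      · exact absurd h hxy0.ne'
      · exact h
    have h7 : x + y = 2 * D := by
      rcases mul_eq_zero.mp h5 with h | h
      · linarith
      · linarith
    have hxD' : x = D := by linarith
    have h8 : (G.degree v : ℝ) = (G.maxDegree : ℝ) := hxD'
    exact_mod_cast h8
  · -- regular → equality
    rintro ⟨k, hk⟩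
    have hmax : G.maxDegree = k :=
      le_antisymm (G.maxDegree_le_of_forall_degree_le k fun v => (hk v).le)
        (hk a ▸ G.degree_le_maxDegree a)
    have hmin : G.minDegree = k :=
      le_antisymm (hk a ▸ G.minDegree_le_degree a)
        (G.le_minDegree_of_forall_le_degree k fun v => (hk v).ge)
    have hDk : D = (k : ℝ) := by rw [hDdef, hmax]
    have hdk : d = (k : ℝ) := by rw [hddef, hmin]
    have hk0 : (0 : ℝ) < (k : ℝ) := hDk ▸ hD0
    have hGA1 : GA1 G = m := by
      rw [GA1_eq]
      have hone : ∀ e ∈ G.edgeFinset, Ffun G e = 1 := by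
        intro e
        induction e using Sym2.ind with
        | _ u w =>
          intro _
          rw [Ffun_mk, hk u, hk w, Real.sqrt_mul_self hk0.le]
          field_simp
          ring
      rw [Finset.sum_congr rfl hone, Finset.sum_const, nsmul_eq_mul, mul_one, hmdef]
    have hM2 : M2 G = (k : ℝ) ^ 2 * m := by
      rw [M2_eq]
      have hone : ∀ e ∈ G.edgeFinset, gfun G e = (k : ℝ) ^ 2 := by
        intro e
        induction e using Sym2.ind with
        | _ u w =>
          intro _
          rw [gfun_mk, hk u, hk w, sq]
      rw [Finset.sum_congr rfl hone, Finset.sum_const, nsmul_eq_mul, hmdef]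
      ring
    rw [hGA1, hM2, hDk, hdk]
    field_simp
    ring
end

section
/- For any graph G, δ·R(G) ≤ GA₁(G) ≤ Δ·R(G), with each equality if and only if G is regular. -/
open Finset Real

variable {V : Type*}

lemma hm_le {d a b : ℝ} (hd : 0 ≤ d) (ha : d ≤ a) (hb : d ≤ b) (ha0 : 0 < a) (hb0 : 0 < b) :
    d * (1 / Real.sqrt (a * b)) ≤ 2 * Real.sqrt (a * b) / (a + b) := by
  have hs : 0 < Real.sqrt (a * b) := Real.sqrt_pos.mpr (by positivity)
  have hss : Real.sqrt (a * b) * Real.sqrt (a * b) = a * b :=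
    Real.mul_self_sqrt (by positivity)
  rw [mul_one_div, div_le_div_iff₀ hs (by linarith)]
  nlinarith

lemma hm_eq_iff {d a b : ℝ} (hd : 0 ≤ d) (ha : d ≤ a) (hb : d ≤ b) (ha0 : 0 < a) (hb0 : 0 < b) :
    d * (1 / Real.sqrt (a * b)) = 2 * Real.sqrt (a * b) / (a + b) ↔ a = d ∧ b = d := by
  have hs : 0 < Real.sqrt (a * b) := Real.sqrt_pos.mpr (by positivity)
  have hss : Real.sqrt (a * b) * Real.sqrt (a * b) = a * b :=
    Real.mul_self_sqrt (by positivity)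
  rw [mul_one_div, div_eq_div_iff hs.ne' (by positivity)]
  constructor
  · intro h
    constructor <;> nlinarith
  · rintro ⟨rfl, h⟩; nlinarith

lemma le_hm {D a b : ℝ} (ha : a ≤ D) (hb : b ≤ D) (ha0 : 0 < a) (hb0 : 0 < b) :
    2 * Real.sqrt (a * b) / (a + b) ≤ D * (1 / Real.sqrt (a * b)) := by
  have hs : 0 < Real.sqrt (a * b) := Real.sqrt_pos.mpr (by positivity)
  have hss : Real.sqrt (a * b) * Real.sqrt (a * b) = a * b :=
    Real.mul_self_sqrt (by positivity)
  rw [mul_one_div, div_le_div_iff₀ (by linarith) hs]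
  nlinarith

lemma le_hm_eq_iff {D a b : ℝ} (ha : a ≤ D) (hb : b ≤ D) (ha0 : 0 < a) (hb0 : 0 < b) :
    2 * Real.sqrt (a * b) / (a + b) = D * (1 / Real.sqrt (a * b)) ↔ a = D ∧ b = D := by
  have hs : 0 < Real.sqrt (a * b) := Real.sqrt_pos.mpr (by positivity)
  have hss : Real.sqrt (a * b) * Real.sqrt (a * b) = a * b :=
    Real.mul_self_sqrt (by positivity)
  rw [mul_one_div, div_eq_div_iff (by positivity) hs.ne']
  constructor
  · intro h
    constructor <;> nlinarith
  · rintro ⟨rfl, h⟩; nlinarith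

lemma all_has_adj (G : SimpleGraph V) [Fintype V] [DecidableRel G.Adj]
    (hc : G.Connected) (hm : G.edgeFinset.Nonempty) (w : V) : ∃ x, G.Adj w x := by
  obtain ⟨e, he⟩ := hm
  induction e using Sym2.ind with
  | _ u v =>
    rw [SimpleGraph.mem_edgeFinset, SimpleGraph.mem_edgeSet] at he
    obtain ⟨p⟩ := hc.preconnected w u
    cases p with
    | nil => exact ⟨v, he⟩
    | cons h _ => exact ⟨_, h⟩

theorem stmt13 (G : SimpleGraph V) [Fintype V] [DecidableRel G.Adj]
    (hc : G.Connected) (hm : G.edgeFinset.Nonempty) :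
    (G.minDegree : ℝ) * randic G ≤ GA1 G ∧ GA1 G ≤ (G.maxDegree : ℝ) * randic G ∧
    (GA1 G = (G.minDegree : ℝ) * randic G ↔ GraphRegular G) ∧
    (GA1 G = (G.maxDegree : ℝ) * randic G ↔ GraphRegular G) := by
  haveI : Nonempty V := hc.nonempty
  have hdeg_pos : ∀ {u v : V}, G.Adj u v → 0 < (G.degree u : ℝ) := by
    intro u v h
    exact_mod_cast G.degree_pos_iff_exists_adj u |>.mpr ⟨v, h⟩
  -- rewrite c * randic as a sum of lifts
  have hmul : ∀ c : ℝ, c * randic G = ∑ e ∈ G.edgeFinset,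
      Sym2.lift ⟨fun u v => c * (1 / Real.sqrt ((G.degree u : ℝ) * (G.degree v : ℝ))),
        fun u v => by dsimp only; rw [mul_comm ((G.degree u : ℝ))]⟩ e := by
    intro c
    rw [randic, edgeSum, Finset.mul_sum]
    refine Finset.sum_congr rfl fun e _ => ?_
    induction e using Sym2.ind with
    | _ u v => simp
  -- pointwise bounds
  have hptmin : ∀ e ∈ G.edgeFinset,
      Sym2.lift ⟨fun u v => (G.minDegree : ℝ) * (1 / Real.sqrt ((G.degree u : ℝ) * (G.degree v : ℝ))),
        fun u v => by dsimp only; rw [mul_comm ((G.degree u : ℝ))]⟩ e ≤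
      Sym2.lift ⟨fun u v => 2 * Real.sqrt ((G.degree u : ℝ) * (G.degree v : ℝ)) / ((G.degree u : ℝ) + (G.degree v : ℝ)),
        fun a b => by dsimp only; rw [mul_comm ((G.degree a : ℝ)), add_comm ((G.degree a : ℝ))]⟩ e := by
    intro e he
    induction e using Sym2.ind with
    | _ u v =>
      rw [SimpleGraph.mem_edgeFinset, SimpleGraph.mem_edgeSet] at he
      simp only [Sym2.lift_mk]
      exact hm_le (by positivity) (Nat.cast_le.mpr (G.minDegree_le_degree u))
        (Nat.cast_le.mpr (G.minDegree_le_degree v)) (hdeg_pos he) (hdeg_pos he.symm)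
  have hptmax : ∀ e ∈ G.edgeFinset,
      Sym2.lift ⟨fun u v => 2 * Real.sqrt ((G.degree u : ℝ) * (G.degree v : ℝ)) / ((G.degree u : ℝ) + (G.degree v : ℝ)),
        fun a b => by dsimp only; rw [mul_comm ((G.degree a : ℝ)), add_comm ((G.degree a : ℝ))]⟩ e ≤
      Sym2.lift ⟨fun u v => (G.maxDegree : ℝ) * (1 / Real.sqrt ((G.degree u : ℝ) * (G.degree v : ℝ))),
        fun u v => by dsimp only; rw [mul_comm ((G.degree u : ℝ))]⟩ e := by
    intro e he
    induction e using Sym2.ind with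
    | _ u v =>
      rw [SimpleGraph.mem_edgeFinset, SimpleGraph.mem_edgeSet] at he
      simp only [Sym2.lift_mk]
      exact le_hm (Nat.cast_le.mpr (G.degree_le_maxDegree u))
        (Nat.cast_le.mpr (G.degree_le_maxDegree v)) (hdeg_pos he) (hdeg_pos he.symm)
  have hGA : GA1 G = ∑ e ∈ G.edgeFinset,
      Sym2.lift ⟨fun u v => 2 * Real.sqrt ((G.degree u : ℝ) * (G.degree v : ℝ)) / ((G.degree u : ℝ) + (G.degree v : ℝ)),
        fun a b => by dsimp only; rw [mul_comm ((G.degree a : ℝ)), add_comm ((G.degree a : ℝ))]⟩ e := rfl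
  -- regular implies equality with any c equal to the common degree
  have hreg_eq : ∀ k : ℕ, G.IsRegularOfDegree k → GA1 G = (k : ℝ) * randic G := by
    intro k hk
    obtain ⟨e0, he0⟩ := hm
    have hkpos : 0 < (k : ℝ) := by
      induction e0 using Sym2.ind with
      | _ u v =>
        rw [SimpleGraph.mem_edgeFinset, SimpleGraph.mem_edgeSet] at he0
        have := hdeg_pos he0
        rwa [hk u] at this
    rw [hGA, hmul]
    refine Finset.sum_congr rfl fun e _ => ?_
    induction e using Sym2.ind with
    | _ u v =>
      simp only [Sym2.lift_mk, hk u, hk v]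
      rw [Real.sqrt_mul_self hkpos.le]
      field_simp
      ring
  have hminmax : ∀ k : ℕ, G.IsRegularOfDegree k → G.minDegree = k ∧ G.maxDegree = k := by
    intro k hk
    obtain ⟨u⟩ := ‹Nonempty V›
    constructor
    · exact le_antisymm (hk u ▸ G.minDegree_le_degree u)
        (G.le_minDegree_of_forall_le_degree k fun v => (hk v).ge)
    · exact le_antisymm (G.maxDegree_le_of_forall_degree_le k fun v => (hk v).le)
        (hk u ▸ G.degree_le_maxDegree u)
  refine ⟨?_, ?_, ?_, ?_⟩
  · rw [hGA, hmul]; exact Finset.sum_le_sum hptmin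
  · rw [hGA, hmul]; exact Finset.sum_le_sum hptmax
  · constructor
    · intro h
      rw [hGA, hmul] at h
      have heq := (Finset.sum_eq_sum_iff_of_le hptmin).mp h.symm
      refine ⟨G.minDegree, fun w => ?_⟩
      obtain ⟨x, hwx⟩ := all_has_adj G hc hm w
      have he : s(w, x) ∈ G.edgeFinset := by
        rw [SimpleGraph.mem_edgeFinset, SimpleGraph.mem_edgeSet]; exact hwx
      have := heq _ he
      simp only [Sym2.lift_mk] at this
      have h2 := (hm_eq_iff (by positivity) (Nat.cast_le.mpr (G.minDegree_le_degree w))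
        (Nat.cast_le.mpr (G.minDegree_le_degree x)) (hdeg_pos hwx) (hdeg_pos hwx.symm)).mp this
      exact_mod_cast h2.1
    · rintro ⟨k, hk⟩
      rw [(hminmax k hk).1]
      exact hreg_eq k hk
  · constructor
    · intro h
      rw [hGA, hmul] at h
      have heq := (Finset.sum_eq_sum_iff_of_le hptmax).mp h
      refine ⟨G.maxDegree, fun w => ?_⟩
      obtain ⟨x, hwx⟩ := all_has_adj G hc hm w
      have he : s(w, x) ∈ G.edgeFinset := by
        rw [SimpleGraph.mem_edgeFinset, SimpleGraph.mem_edgeSet]; exact hwx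
      have := heq _ he
      simp only [Sym2.lift_mk] at this
      have h2 := (le_hm_eq_iff (Nat.cast_le.mpr (G.degree_le_maxDegree w))
        (Nat.cast_le.mpr (G.degree_le_maxDegree x)) (hdeg_pos hwx) (hdeg_pos hwx.symm)).mp this
      exact_mod_cast h2.1
    · rintro ⟨k, hk⟩
      rw [(hminmax k hk).2]
      exact hreg_eq k hk
end

section
/- For any graph G and real α ≤ 1/2 with α ≠ 0, δ^(−2α+1)·Δ^(−1)·R_α(G) ≤ GA₁(G) ≤ Δ^(−2α+1)·δ^(−1)·R_α(G), with each equality if and only if G is regular. -/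
open Finset Real

variable {V : Type*}

lemma aux_ga_rw (x y α : ℝ) (hx : 0 < x) (hy : 0 < y) :
    2 * Real.sqrt (x * y) / (x + y) = (x * y) ^ α * ((x * y) ^ (1/2 - α) * (2 / (x + y))) := by
  rw [Real.sqrt_eq_rpow, show (1/(2:ℝ)) = α + (1/2 - α) by ring,
    Real.rpow_add (mul_pos hx hy)]
  ring

lemma aux_lower_core (δ Δ x y α : ℝ) (hδ : 0 < δ) (hx1 : δ ≤ x) (hy1 : δ ≤ y)
    (hα : α ≤ 1/2) : δ ^ (-(2 * α) + 1) ≤ (x * y) ^ (1/2 - α) := by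
  have hx : 0 < x := hδ.trans_le hx1
  have e1 : δ ^ (-(2 * α) + 1) = (δ * δ) ^ (1/2 - α) := by
    rw [Real.mul_rpow hδ.le hδ.le, ← Real.rpow_add hδ]
    congr 1; ring
  rw [e1]
  exact Real.rpow_le_rpow (by positivity) (mul_le_mul hx1 hy1 hδ.le hx.le) (by linarith)

lemma aux_upper_core (δ Δ x y α : ℝ) (hδ : 0 < δ) (hx1 : δ ≤ x) (hx2 : x ≤ Δ)
    (hy1 : δ ≤ y) (hy2 : y ≤ Δ) (hα : α ≤ 1/2) :
    (x * y) ^ (1/2 - α) ≤ Δ ^ (-(2 * α) + 1) := by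
  have hx : 0 < x := hδ.trans_le hx1
  have hy : 0 < y := hδ.trans_le hy1
  have hΔ : 0 < Δ := hx.trans_le hx2
  have e1 : Δ ^ (-(2 * α) + 1) = (Δ * Δ) ^ (1/2 - α) := by
    rw [Real.mul_rpow hΔ.le hΔ.le, ← Real.rpow_add hΔ]
    congr 1; ring
  rw [e1]
  exact Real.rpow_le_rpow (by positivity) (mul_le_mul hx2 hy2 hy.le hΔ.le) (by linarith)

lemma aux_lower (δ Δ x y α : ℝ) (hδ : 0 < δ) (hx1 : δ ≤ x) (hx2 : x ≤ Δ)
    (hy1 : δ ≤ y) (hy2 : y ≤ Δ) (hα : α ≤ 1/2) :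
    δ ^ (-(2 * α) + 1) * Δ⁻¹ * (x * y) ^ α ≤ 2 * Real.sqrt (x * y) / (x + y) := by
  have hx : 0 < x := hδ.trans_le hx1
  have hy : 0 < y := hδ.trans_le hy1
  have hΔ : 0 < Δ := hx.trans_le hx2
  have hs : 0 < x + y := by linarith
  rw [aux_ga_rw x y α hx hy]
  have h1 := aux_lower_core δ Δ x y α hδ hx1 hy1 hα
  have h2 : Δ⁻¹ ≤ 2 / (x + y) := by
    rw [inv_eq_one_div, div_le_div_iff₀ hΔ hs]; linarith
  calc δ ^ (-(2 * α) + 1) * Δ⁻¹ * (x * y) ^ α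
      ≤ ((x * y) ^ (1/2 - α) * (2 / (x + y))) * (x * y) ^ α := by
        apply mul_le_mul_of_nonneg_right _ (Real.rpow_nonneg (by positivity) α)
        exact mul_le_mul h1 h2 (by positivity) (Real.rpow_nonneg (by positivity) _)
    _ = (x * y) ^ α * ((x * y) ^ (1/2 - α) * (2 / (x + y))) := by ring

lemma aux_lower_lt (δ Δ x y α : ℝ) (hδ : 0 < δ) (hx1 : δ ≤ x) (hx2 : x ≤ Δ)
    (hy1 : δ ≤ y) (hy2 : y ≤ Δ) (hα : α ≤ 1/2) (hlt : x < Δ ∨ y < Δ) :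
    δ ^ (-(2 * α) + 1) * Δ⁻¹ * (x * y) ^ α < 2 * Real.sqrt (x * y) / (x + y) := by
  have hx : 0 < x := hδ.trans_le hx1
  have hy : 0 < y := hδ.trans_le hy1
  have hΔ : 0 < Δ := hx.trans_le hx2
  have hs : 0 < x + y := by linarith
  rw [aux_ga_rw x y α hx hy]
  have h1 := aux_lower_core δ Δ x y α hδ hx1 hy1 hα
  have h2 : Δ⁻¹ < 2 / (x + y) := by
    rw [inv_eq_one_div, div_lt_div_iff₀ hΔ hs]
    rcases hlt with h | h <;> nlinarith
  calc δ ^ (-(2 * α) + 1) * Δ⁻¹ * (x * y) ^ α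
      < ((x * y) ^ (1/2 - α) * (2 / (x + y))) * (x * y) ^ α := by
        apply mul_lt_mul_of_pos_right _ (Real.rpow_pos_of_pos (by positivity) α)
        exact mul_lt_mul' h1 h2 (by positivity) (Real.rpow_pos_of_pos (by positivity) _)
    _ = (x * y) ^ α * ((x * y) ^ (1/2 - α) * (2 / (x + y))) := by ring

lemma aux_upper (δ Δ x y α : ℝ) (hδ : 0 < δ) (hx1 : δ ≤ x) (hx2 : x ≤ Δ)
    (hy1 : δ ≤ y) (hy2 : y ≤ Δ) (hα : α ≤ 1/2) :
    2 * Real.sqrt (x * y) / (x + y) ≤ Δ ^ (-(2 * α) + 1) * δ⁻¹ * (x * y) ^ α := by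
  have hx : 0 < x := hδ.trans_le hx1
  have hy : 0 < y := hδ.trans_le hy1
  have hΔ : 0 < Δ := hx.trans_le hx2
  have hs : 0 < x + y := by linarith
  rw [aux_ga_rw x y α hx hy]
  have h1 := aux_upper_core δ Δ x y α hδ hx1 hx2 hy1 hy2 hα
  have h2 : 2 / (x + y) ≤ δ⁻¹ := by
    rw [inv_eq_one_div, div_le_div_iff₀ hs hδ]; linarith
  calc (x * y) ^ α * ((x * y) ^ (1/2 - α) * (2 / (x + y)))
      = ((x * y) ^ (1/2 - α) * (2 / (x + y))) * (x * y) ^ α := by ring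
    _ ≤ Δ ^ (-(2 * α) + 1) * δ⁻¹ * (x * y) ^ α := by
        apply mul_le_mul_of_nonneg_right _ (Real.rpow_nonneg (by positivity) α)
        exact mul_le_mul h1 h2 (by positivity) (Real.rpow_nonneg (by positivity) _)

lemma aux_upper_lt (δ Δ x y α : ℝ) (hδ : 0 < δ) (hx1 : δ ≤ x) (hx2 : x ≤ Δ)
    (hy1 : δ ≤ y) (hy2 : y ≤ Δ) (hα : α ≤ 1/2) (hlt : δ < x ∨ δ < y) :
    2 * Real.sqrt (x * y) / (x + y) < Δ ^ (-(2 * α) + 1) * δ⁻¹ * (x * y) ^ α := by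
  have hx : 0 < x := hδ.trans_le hx1
  have hy : 0 < y := hδ.trans_le hy1
  have hΔ : 0 < Δ := hx.trans_le hx2
  have hs : 0 < x + y := by linarith
  rw [aux_ga_rw x y α hx hy]
  have h1 := aux_upper_core δ Δ x y α hδ hx1 hx2 hy1 hy2 hα
  have h2 : 2 / (x + y) < δ⁻¹ := by
    rw [inv_eq_one_div, div_lt_div_iff₀ hs hδ]
    rcases hlt with h | h <;> nlinarith
  calc (x * y) ^ α * ((x * y) ^ (1/2 - α) * (2 / (x + y)))
      = ((x * y) ^ (1/2 - α) * (2 / (x + y))) * (x * y) ^ α := by ring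
    _ < Δ ^ (-(2 * α) + 1) * δ⁻¹ * (x * y) ^ α := by
        apply mul_lt_mul_of_pos_right _ (Real.rpow_pos_of_pos (by positivity) α)
        exact mul_lt_mul' h1 h2 (by positivity) (by positivity)

lemma aux_reg (k α : ℝ) (hk : 0 < k) :
    k ^ (-(2 * α) + 1) * k⁻¹ * (k * k) ^ α = 2 * Real.sqrt (k * k) / (k + k) := by
  have h2 : 2 * Real.sqrt (k * k) / (k + k) = 1 := by
    rw [Real.sqrt_mul_self hk.le]
    field_simp
    ring
  rw [h2]
  calc k ^ (-(2 * α) + 1) * k⁻¹ * (k * k) ^ α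
      = k ^ (-(2 * α) + 1) * k ^ (-1 : ℝ) * (k ^ α * k ^ α) := by
        rw [Real.rpow_neg_one, Real.mul_rpow hk.le hk.le]
    _ = k ^ ((-(2 * α) + 1) + (-1) + (α + α)) := by
        rw [← Real.rpow_add hk, ← Real.rpow_add hk, ← Real.rpow_add hk]
    _ = 1 := by
        rw [show (-(2 * α) + 1) + (-1) + (α + α) = (0:ℝ) by ring, Real.rpow_zero]

theorem stmt14 (G : SimpleGraph V) [Fintype V] [DecidableRel G.Adj]
    (hc : G.Connected) (hm : G.edgeFinset.Nonempty) (α : ℝ) (hα : α ≤ 1/2) (hα0 : α ≠ 0) :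
    (G.minDegree : ℝ) ^ (-(2 * α) + 1) * (G.maxDegree : ℝ)⁻¹ * genRandic G α ≤ GA1 G ∧
    GA1 G ≤ (G.maxDegree : ℝ) ^ (-(2 * α) + 1) * (G.minDegree : ℝ)⁻¹ * genRandic G α ∧
    (GA1 G = (G.minDegree : ℝ) ^ (-(2 * α) + 1) * (G.maxDegree : ℝ)⁻¹ * genRandic G α ↔ GraphRegular G) ∧
    (GA1 G = (G.maxDegree : ℝ) ^ (-(2 * α) + 1) * (G.minDegree : ℝ)⁻¹ * genRandic G α ↔ GraphRegular G) := by
  classical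
  obtain ⟨e0, he0⟩ := hm
  have hadj : ∃ u v, G.Adj u v := by
    induction e0 using Sym2.ind with
    | _ u v => exact ⟨u, v, by simpa using he0⟩
  obtain ⟨u0, v0, h00⟩ := hadj
  haveI : Nonempty V := ⟨u0⟩
  have hnbr : ∀ a : V, ∃ b, G.Adj a b := by
    intro a
    by_cases h : a = u0
    · exact ⟨v0, h ▸ h00⟩
    · obtain ⟨p⟩ := hc.preconnected a u0
      cases p with
      | nil => exact absurd rfl h
      | cons ha _ => exact ⟨_, ha⟩
  have hdeg : ∀ a : V, 0 < G.degree a := fun a =>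
    (G.degree_pos_iff_exists_adj a).mpr (hnbr a)
  have hδpos : 0 < G.minDegree := by
    obtain ⟨v, hv⟩ := G.exists_minimal_degree_vertex
    rw [hv]; exact hdeg v
  have hδR : (0:ℝ) < (G.minDegree : ℝ) := by exact_mod_cast hδpos
  have hlb : ∀ a : V, (G.minDegree : ℝ) ≤ (G.degree a : ℝ) := fun a => by
    exact_mod_cast G.minDegree_le_degree a
  have hub : ∀ a : V, (G.degree a : ℝ) ≤ (G.maxDegree : ℝ) := fun a => by
    exact_mod_cast G.degree_le_maxDegree a
  -- the two inequalities
  have hL : (G.minDegree : ℝ) ^ (-(2 * α) + 1) * (G.maxDegree : ℝ)⁻¹ * genRandic G α ≤ GA1 G := by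
    simp only [GA1, genRandic, edgeSum]
    rw [Finset.mul_sum]
    apply Finset.sum_le_sum
    intro e he
    induction e using Sym2.ind with
    | _ a b =>
      simp only [Sym2.lift_mk]
      exact aux_lower _ _ _ _ α hδR (hlb a) (hub a) (hlb b) (hub b) hα
  have hU : GA1 G ≤ (G.maxDegree : ℝ) ^ (-(2 * α) + 1) * (G.minDegree : ℝ)⁻¹ * genRandic G α := by
    simp only [GA1, genRandic, edgeSum]
    rw [Finset.mul_sum]
    apply Finset.sum_le_sum
    intro e he
    induction e using Sym2.ind with
    | _ a b =>
      simp only [Sym2.lift_mk]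
      exact aux_upper _ _ _ _ α hδR (hlb a) (hub a) (hlb b) (hub b) hα
  -- strict inequalities when not regular
  have hLs : ¬ GraphRegular G →
      (G.minDegree : ℝ) ^ (-(2 * α) + 1) * (G.maxDegree : ℝ)⁻¹ * genRandic G α < GA1 G := by
    intro hnr
    have hv : ∃ v, G.degree v ≠ G.maxDegree := by
      by_contra h
      push_neg at h
      exact hnr ⟨G.maxDegree, fun v => h v⟩
    obtain ⟨v, hv⟩ := hv
    have hvlt : (G.degree v : ℝ) < (G.maxDegree : ℝ) := by
      exact_mod_cast lt_of_le_of_ne (G.degree_le_maxDegree v) hv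
    obtain ⟨w, hw⟩ := hnbr v
    simp only [GA1, genRandic, edgeSum]
    rw [Finset.mul_sum]
    apply Finset.sum_lt_sum
    · intro e he
      induction e using Sym2.ind with
      | _ a b =>
        simp only [Sym2.lift_mk]
        exact aux_lower _ _ _ _ α hδR (hlb a) (hub a) (hlb b) (hub b) hα
    · refine ⟨s(v, w), ?_, ?_⟩
      · simpa using hw
      · simp only [Sym2.lift_mk]
        exact aux_lower_lt _ _ _ _ α hδR (hlb v) (hub v) (hlb w) (hub w) hα (Or.inl hvlt)
  have hUs : ¬ GraphRegular G →
      GA1 G < (G.maxDegree : ℝ) ^ (-(2 * α) + 1) * (G.minDegree : ℝ)⁻¹ * genRandic G α := by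
    intro hnr
    have hv : ∃ v, G.degree v ≠ G.minDegree := by
      by_contra h
      push_neg at h
      exact hnr ⟨G.minDegree, fun v => h v⟩
    obtain ⟨v, hv⟩ := hv
    have hvlt : (G.minDegree : ℝ) < (G.degree v : ℝ) := by
      exact_mod_cast lt_of_le_of_ne (G.minDegree_le_degree v) (Ne.symm hv)
    obtain ⟨w, hw⟩ := hnbr v
    simp only [GA1, genRandic, edgeSum]
    rw [Finset.mul_sum]
    apply Finset.sum_lt_sum
    · intro e he
      induction e using Sym2.ind with
      | _ a b =>
        simp only [Sym2.lift_mk]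
        exact aux_upper _ _ _ _ α hδR (hlb a) (hub a) (hlb b) (hub b) hα
    · refine ⟨s(v, w), ?_, ?_⟩
      · simpa using hw
      · simp only [Sym2.lift_mk]
        exact aux_upper_lt _ _ _ _ α hδR (hlb v) (hub v) (hlb w) (hub w) hα (Or.inl hvlt)
  -- equality in the regular case
  have hEq : GraphRegular G →
      GA1 G = (G.minDegree : ℝ) ^ (-(2 * α) + 1) * (G.maxDegree : ℝ)⁻¹ * genRandic G α ∧
      GA1 G = (G.maxDegree : ℝ) ^ (-(2 * α) + 1) * (G.minDegree : ℝ)⁻¹ * genRandic G α := by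
    rintro ⟨k, hk⟩
    have hmink : G.minDegree = k := by
      obtain ⟨v, hv⟩ := G.exists_minimal_degree_vertex
      rw [hv, hk v]
    have hmaxk : G.maxDegree = k := by
      obtain ⟨v, hv⟩ := G.exists_maximal_degree_vertex
      rw [hv, hk v]
    have hkpos : (0:ℝ) < (k:ℝ) := by
      rw [← hmink]; exact hδR
    have hcalc : GA1 G = (k : ℝ) ^ (-(2 * α) + 1) * ((k : ℝ))⁻¹ * genRandic G α := by
      simp only [GA1, genRandic, edgeSum]
      rw [Finset.mul_sum]
      apply Finset.sum_congr rfl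
      intro e he
      induction e using Sym2.ind with
      | _ a b =>
        simp only [Sym2.lift_mk]
        rw [hk a, hk b]
        exact (aux_reg (k:ℝ) α hkpos).symm
    constructor
    · rw [hmink, hmaxk]; exact hcalc
    · rw [hmink, hmaxk]; exact hcalc
  refine ⟨hL, hU, ⟨fun h => ?_, fun hr => (hEq hr).1⟩, ⟨fun h => ?_, fun hr => (hEq hr).2⟩⟩
  · by_contra hnr
    exact (hLs hnr).ne' h
  · by_contra hnr
    exact (hUs hnr).ne h
end

section
/- For any graph G and real α ≥ 1/2, Δ^(−2α)·R_α(G) ≤ GA₁(G) ≤ δ^(−2α)·R_α(G), with each equality if and only if G is regular. -/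
open Finset Real

variable {V : Type*}

lemma edge_low {d x y α : ℝ} (hα : 1/2 ≤ α) (hx : 0 < x) (hy : 0 < y)
    (hxd : x ≤ d) (hyd : y ≤ d) :
    d ^ (-(2*α)) * (x*y)^α ≤ 2 * Real.sqrt (x*y) / (x+y) ∧
    (d ^ (-(2*α)) * (x*y)^α = 2 * Real.sqrt (x*y) / (x+y) ↔ x = d ∧ y = d) := by
  have hd : 0 < d := lt_of_lt_of_le hx hxd
  have hxy : 0 < x*y := mul_pos hx hy
  have hs : 0 < Real.sqrt (x*y) := Real.sqrt_pos.mpr hxy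
  have hA : d ^ (-(2*α)) * (x*y)^α = (x*y/(d*d))^α := by
    rw [Real.div_rpow hxy.le (by positivity), show d*d = d^(2:ℕ) from (sq d).symm,
      ← Real.rpow_natCast d 2, ← Real.rpow_mul hd.le]
    push_cast
    rw [Real.rpow_neg hd.le, inv_mul_eq_div]
  have hmid : (x*y/(d*d))^α ≤ Real.sqrt (x*y) / d := by
    have ht1 : x*y/(d*d) ≤ 1 :=
      (div_le_one (by positivity)).mpr (mul_le_mul hxd hyd hy.le hd.le)
    have ht0 : 0 < x*y/(d*d) := by positivity
    have h2 := Real.rpow_le_rpow_of_exponent_ge ht0 ht1 hα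
    calc (x*y/(d*d))^α ≤ (x*y/(d*d))^(1/2 : ℝ) := h2
      _ = Real.sqrt (x*y/(d*d)) := (Real.sqrt_eq_rpow _).symm
      _ = Real.sqrt (x*y) / d := by
          rw [Real.sqrt_div hxy.le, Real.sqrt_mul_self hd.le]
  have hup : Real.sqrt (x*y) / d ≤ 2 * Real.sqrt (x*y) / (x+y) := by
    rw [div_le_div_iff₀ hd (by linarith)]
    nlinarith [hs.le, mul_le_mul_of_nonneg_left (show x+y ≤ 2*d by linarith) hs.le]
  refine ⟨hA ▸ hmid.trans hup, ⟨?_, ?_⟩⟩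
  · intro h
    have h2 : 2 * Real.sqrt (x*y) / (x+y) ≤ Real.sqrt (x*y) / d := by
      calc 2 * Real.sqrt (x*y) / (x+y) = (x*y/(d*d))^α := by rw [← hA, h]
        _ ≤ Real.sqrt (x*y) / d := hmid
    have heq : Real.sqrt (x*y) / d = 2 * Real.sqrt (x*y) / (x+y) := le_antisymm hup h2
    rw [div_eq_div_iff hd.ne' (by positivity)] at heq
    have h5 : Real.sqrt (x*y) * (x+y) = Real.sqrt (x*y) * (2*d) := by linear_combination heq
    have h6 : x + y = 2*d := mul_left_cancel₀ hs.ne' h5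
    exact ⟨by linarith, by linarith⟩
  · rintro ⟨hxe, hye⟩
    rw [hxe, hye]
    have h1 : d ^ (-(2*α)) * (d*d)^α = 1 := by
      rw [Real.mul_rpow hd.le hd.le, ← mul_assoc, ← Real.rpow_add hd, ← Real.rpow_add hd,
        show -(2*α)+α+α = 0 by ring, Real.rpow_zero]
    rw [h1, Real.sqrt_mul_self hd.le, eq_div_iff (by linarith)]
    ring

lemma edge_high {c x y α : ℝ} (hα : 1/2 ≤ α) (hc : 0 < c)
    (hxc : c ≤ x) (hyc : c ≤ y) :
    2 * Real.sqrt (x*y) / (x+y) ≤ c ^ (-(2*α)) * (x*y)^α ∧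
    (c ^ (-(2*α)) * (x*y)^α = 2 * Real.sqrt (x*y) / (x+y) ↔ x = c ∧ y = c) := by
  have hx : 0 < x := hc.trans_le hxc
  have hy : 0 < y := hc.trans_le hyc
  have hxy : 0 < x*y := mul_pos hx hy
  have hs : 0 < Real.sqrt (x*y) := Real.sqrt_pos.mpr hxy
  have hA : c ^ (-(2*α)) * (x*y)^α = (x*y/(c*c))^α := by
    rw [Real.div_rpow hxy.le (by positivity), show c*c = c^(2:ℕ) from (sq c).symm,
      ← Real.rpow_natCast c 2, ← Real.rpow_mul hc.le]
    push_cast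
    rw [Real.rpow_neg hc.le, inv_mul_eq_div]
  have hmid : Real.sqrt (x*y) / c ≤ (x*y/(c*c))^α := by
    have ht1 : 1 ≤ x*y/(c*c) :=
      (one_le_div (by positivity)).mpr (mul_le_mul hxc hyc hc.le hx.le)
    have h2 := Real.rpow_le_rpow_of_exponent_le ht1 hα
    calc Real.sqrt (x*y) / c = Real.sqrt (x*y/(c*c)) := by
          rw [Real.sqrt_div hxy.le, Real.sqrt_mul_self hc.le]
      _ = (x*y/(c*c))^(1/2 : ℝ) := Real.sqrt_eq_rpow _
      _ ≤ (x*y/(c*c))^α := h2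
  have hup : 2 * Real.sqrt (x*y) / (x+y) ≤ Real.sqrt (x*y) / c := by
    rw [div_le_div_iff₀ (by linarith) hc]
    nlinarith [hs.le, mul_le_mul_of_nonneg_left (show 2*c ≤ x+y by linarith) hs.le]
  refine ⟨hA ▸ hup.trans hmid, ⟨?_, ?_⟩⟩
  · intro h
    have h2 : Real.sqrt (x*y) / c ≤ 2 * Real.sqrt (x*y) / (x+y) := by
      calc Real.sqrt (x*y) / c ≤ (x*y/(c*c))^α := hmid
        _ = 2 * Real.sqrt (x*y) / (x+y) := by rw [← hA, h]
    have heq : Real.sqrt (x*y) / c = 2 * Real.sqrt (x*y) / (x+y) := le_antisymm h2 hup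
    rw [div_eq_div_iff hc.ne' (by positivity)] at heq
    have h5 : Real.sqrt (x*y) * (x+y) = Real.sqrt (x*y) * (2*c) := by linear_combination heq
    have h6 : x + y = 2*c := mul_left_cancel₀ hs.ne' h5
    exact ⟨by linarith, by linarith⟩
  · rintro ⟨hxe, hye⟩
    rw [hxe, hye]
    have h1 : c ^ (-(2*α)) * (c*c)^α = 1 := by
      rw [Real.mul_rpow hc.le hc.le, ← mul_assoc, ← Real.rpow_add hc, ← Real.rpow_add hc,
        show -(2*α)+α+α = 0 by ring, Real.rpow_zero]
    rw [h1, Real.sqrt_mul_self hc.le, eq_div_iff (by linarith)]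
    ring
theorem stmt15 (G : SimpleGraph V) [Fintype V] [DecidableRel G.Adj]
    (hc : G.Connected) (hm : G.edgeFinset.Nonempty) (α : ℝ) (hα : 1/2 ≤ α) :
    (G.maxDegree : ℝ) ^ (-(2 * α)) * genRandic G α ≤ GA1 G ∧
    GA1 G ≤ (G.minDegree : ℝ) ^ (-(2 * α)) * genRandic G α ∧
    (GA1 G = (G.maxDegree : ℝ) ^ (-(2 * α)) * genRandic G α ↔ GraphRegular G) ∧
    (GA1 G = (G.minDegree : ℝ) ^ (-(2 * α)) * genRandic G α ↔ GraphRegular G) := by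
  classical
  obtain ⟨u, w, huw⟩ : ∃ u w, G.Adj u w := by
    obtain ⟨e0, he0⟩ := hm
    have h := SimpleGraph.mem_edgeFinset.mp he0
    revert h
    refine Sym2.ind (fun u w h => ⟨u, w, h⟩) e0
  haveI hV : Nonempty V := ⟨u⟩
  have hdegpos : ∀ v : V, 0 < G.degree v := by
    intro v
    rw [SimpleGraph.degree_pos_iff_exists_adj]
    by_cases hvu : v = u
    · exact hvu ▸ ⟨w, huw⟩
    · obtain ⟨p⟩ := hc.preconnected v u
      cases p with
      | nil => exact absurd rfl hvu
      | cons h _ => exact ⟨_, h⟩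
  have hδ : 0 < G.minDegree := by
    obtain ⟨v, hv⟩ := G.exists_minimal_degree_vertex
    rw [hv]; exact hdegpos v
  have hcastdeg : ∀ v : V, (0:ℝ) < G.degree v := fun v => by exact_mod_cast hdegpos v
  have hmaxle : ∀ v : V, (G.degree v : ℝ) ≤ (G.maxDegree : ℝ) := fun v => by
    exact_mod_cast G.degree_le_maxDegree v
  have hminle : ∀ v : V, (G.minDegree : ℝ) ≤ (G.degree v : ℝ) := fun v => by
    exact_mod_cast G.minDegree_le_degree v
  have hmin0 : (0:ℝ) < (G.minDegree : ℝ) := by exact_mod_cast hδ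
  -- regularity characterizations
  have hreg_max : (∀ e ∈ G.edgeFinset, ∀ v ∈ e, G.degree v = G.maxDegree) ↔ GraphRegular G := by
    constructor
    · intro h
      refine ⟨G.maxDegree, fun v => ?_⟩
      obtain ⟨x, hx⟩ := (G.degree_pos_iff_exists_adj v).mp (hdegpos v)
      have he : s(v, x) ∈ G.edgeFinset :=
        SimpleGraph.mem_edgeFinset.mpr ((G.mem_edgeSet).mpr hx)
      exact h _ he v (Sym2.mem_mk_left v x)
    · rintro ⟨k, hk⟩ e he v hv
      have hmax : G.maxDegree = k := le_antisymm
        (G.maxDegree_le_of_forall_degree_le k fun v => (hk v).le)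
        ((hk u) ▸ G.degree_le_maxDegree u)
      rw [hk v, hmax]
  have hreg_min : (∀ e ∈ G.edgeFinset, ∀ v ∈ e, G.degree v = G.minDegree) ↔ GraphRegular G := by
    constructor
    · intro h
      refine ⟨G.minDegree, fun v => ?_⟩
      obtain ⟨x, hx⟩ := (G.degree_pos_iff_exists_adj v).mp (hdegpos v)
      have he : s(v, x) ∈ G.edgeFinset :=
        SimpleGraph.mem_edgeFinset.mpr ((G.mem_edgeSet).mpr hx)
      exact h _ he v (Sym2.mem_mk_left v x)
    · rintro ⟨k, hk⟩ e he v hv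
      have hmin : G.minDegree = k := le_antisymm
        (G.minDegree_le_degree u |>.trans (hk u).le)
        (G.le_minDegree_of_forall_le_degree k fun v => (hk v).ge)
      rw [hk v, hmin]
  have H1 : (G.maxDegree : ℝ) ^ (-(2 * α)) * genRandic G α ≤ GA1 G := by
    unfold GA1 genRandic edgeSum
    rw [Finset.mul_sum]
    refine Finset.sum_le_sum fun e he => ?_
    clear he
    induction e using Sym2.ind with
    | _ a b =>
      simp only [Sym2.lift_mk]
      exact (edge_low hα (hcastdeg a) (hcastdeg b) (hmaxle a) (hmaxle b)).1
  have H2 : GA1 G ≤ (G.minDegree : ℝ) ^ (-(2 * α)) * genRandic G α := by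
    unfold GA1 genRandic edgeSum
    rw [Finset.mul_sum]
    refine Finset.sum_le_sum fun e he => ?_
    clear he
    induction e using Sym2.ind with
    | _ a b =>
      simp only [Sym2.lift_mk]
      exact (edge_high hα hmin0 (hminle a) (hminle b)).1
  refine ⟨H1, H2, ?_, ?_⟩
  · rw [← hreg_max]
    unfold GA1 genRandic edgeSum
    rw [Finset.mul_sum, eq_comm]
    refine (Finset.sum_eq_sum_iff_of_le fun e he => ?_).trans ?_
    · clear he
      induction e using Sym2.ind with
      | _ a b =>
        simp only [Sym2.lift_mk]
        exact (edge_low hα (hcastdeg a) (hcastdeg b) (hmaxle a) (hmaxle b)).1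
    · refine forall_congr' fun e => ?_
      induction e using Sym2.ind with
      | _ a b =>
        refine imp_congr_right fun he => ?_
        simp only [Sym2.lift_mk, Sym2.mem_iff]
        rw [(edge_low hα (hcastdeg a) (hcastdeg b) (hmaxle a) (hmaxle b)).2]
        constructor
        · rintro ⟨h1, h2⟩ v (rfl | rfl)
          · exact_mod_cast h1
          · exact_mod_cast h2
        · intro h
          constructor
          · exact_mod_cast h a (Or.inl rfl)
          · exact_mod_cast h b (Or.inr rfl)
  · rw [← hreg_min]
    unfold GA1 genRandic edgeSum
    rw [Finset.mul_sum]
    refine (Finset.sum_eq_sum_iff_of_le fun e he => ?_).trans ?_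
    · clear he
      induction e using Sym2.ind with
      | _ a b =>
        simp only [Sym2.lift_mk]
        exact (edge_high hα hmin0 (hminle a) (hminle b)).1
    · refine forall_congr' fun e => ?_
      induction e using Sym2.ind with
      | _ a b =>
        refine imp_congr_right fun he => ?_
        simp only [Sym2.lift_mk, Sym2.mem_iff]
        rw [eq_comm, (edge_high hα hmin0 (hminle a) (hminle b)).2]
        constructor
        · rintro ⟨h1, h2⟩ v (rfl | rfl)
          · exact_mod_cast h1
          · exact_mod_cast h2
        · intro h
          constructor
          · exact_mod_cast h a (Or.inl rfl)
          · exact_mod_cast h b (Or.inr rfl)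
end

section
/- For any graph G and any α > 0, GA₁(G) ≤ √(R_α(G)·R_{−α}(G)); moreover if G is regular then equality holds, and equality implies G is regular. Also GA₁(G) ≥ k_α·√(R_α(G)·R_{−α}(G)), where k_α = 2Δ^{1/2}δ^{3/2}/(Δ²+δ²) if 0 < α ≤ 1 and k_α = 2Δ^{α−1/2}δ^{α+1/2}/(Δ^{2α}+δ^{2α}) if α ≥ 1. -/
open Finset Real

variable {V : Type*}

-- termwise: 2√(xy)/(x+y) ≤ 1
lemma aux_term_le_one {x y : ℝ} (hx : 0 < x) (hy : 0 < y) :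
    2 * Real.sqrt (x * y) / (x + y) ≤ 1 := by
  rw [div_le_one (by positivity)]
  rw [Real.sqrt_mul hx.le]
  nlinarith [sq_nonneg (Real.sqrt x - Real.sqrt y), Real.sq_sqrt hx.le, Real.sq_sqrt hy.le]

lemma aux_term_eq_one {x y : ℝ} (hx : 0 < x) (hy : 0 < y)
    (h : 2 * Real.sqrt (x * y) / (x + y) = 1) : x = y := by
  rw [div_eq_one_iff_eq (by positivity), Real.sqrt_mul hx.le] at h
  have h1 : (Real.sqrt x - Real.sqrt y) ^ 2 = 0 := by
    nlinarith [Real.sq_sqrt hx.le, Real.sq_sqrt hy.le]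
  have h2 : Real.sqrt x = Real.sqrt y := by nlinarith [sq_nonneg (Real.sqrt x - Real.sqrt y)]
  have := congrArg (· ^ 2) h2
  simpa [Real.sq_sqrt hx.le, Real.sq_sqrt hy.le] using this

lemma aux_term_lb {d D x y : ℝ} (hd : 0 < d) (hx1 : d ≤ x) (hx2 : x ≤ D)
    (hy1 : d ≤ y) (hy2 : y ≤ D) :
    2 * Real.sqrt (d * D) / (d + D) ≤ 2 * Real.sqrt (x * y) / (x + y) := by
  have hD : 0 < D := hd.trans_le (hx1.trans hx2)
  have hx : 0 < x := hd.trans_le hx1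
  have hy : 0 < y := hd.trans_le hy1
  have key : (x + y) * Real.sqrt (d * D) ≤ (d + D) * Real.sqrt (x * y) := by
    have hsq : ((x + y) * Real.sqrt (d * D)) ^ 2 ≤ ((d + D) * Real.sqrt (x * y)) ^ 2 := by
      rw [mul_pow, mul_pow, Real.sq_sqrt (by positivity), Real.sq_sqrt (by positivity)]
      have h1 : d * x ≤ D * y := by nlinarith
      have h2 : d * y ≤ D * x := by nlinarith
      nlinarith [mul_nonneg (sub_nonneg.2 h1) (sub_nonneg.2 h2)]
    have h1 := Real.sqrt_le_sqrt hsq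
    rwa [Real.sqrt_sq (by positivity), Real.sqrt_sq (by positivity)] at h1
  rw [div_le_div_iff₀ (by positivity) (by positivity)]
  nlinarith [key]

lemma aux_kant {m M p : ℝ} (hm : 0 < m) (h1 : m ≤ p) (h2 : p ≤ M) :
    p + m * M * p⁻¹ ≤ m + M := by
  have hp : 0 < p := hm.trans_le h1
  rw [← sub_nonneg]
  have : m + M - (p + m * M * p⁻¹) = (p - m) * (M - p) * p⁻¹ := by
    field_simp; ring
  rw [this]
  exact mul_nonneg (mul_nonneg (sub_nonneg.2 h1) (sub_nonneg.2 h2)) (inv_nonneg.2 hp.le)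

lemma aux_final2 {A B d D sd sD m' X Y : ℝ} (hA : 0 < A) (hB : 0 < B) (hd : 0 < d) (hD : 0 < D)
    (hsd2 : sd ^ 2 = d) (hsD2 : sD ^ 2 = D) (hsd0 : 0 ≤ sd) (hsD0 : 0 < sD) (hdD : d ≤ D)
    (hm : 0 ≤ m') (hX : X ≤ m' * (A ^ 2 + B ^ 2) / (2 * (A * B)))
    (hc1 : 2 * (sd * sD) / (d + D) * m' ≤ Y) :
    2 * (B / sD) * (A * sd) / (B ^ 2 + A ^ 2) * X ≤ Y := by
  have hK0 : 0 ≤ 2 * (B / sD) * (A * sd) / (B ^ 2 + A ^ 2) := by positivity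
  have step1 : 2 * (B / sD) * (A * sd) / (B ^ 2 + A ^ 2) * X ≤
      2 * (B / sD) * (A * sd) / (B ^ 2 + A ^ 2) * (m' * (A ^ 2 + B ^ 2) / (2 * (A * B))) :=
    mul_le_mul_of_nonneg_left hX hK0
  have hKeq : 2 * (B / sD) * (A * sd) / (B ^ 2 + A ^ 2) *
      (m' * (A ^ 2 + B ^ 2) / (2 * (A * B))) = m' * sd / sD := by
    field_simp
    ring
  have step2 : m' * sd / sD ≤ 2 * (sd * sD) / (d + D) * m' := by
    have hdD0 : 0 < d + D := by linarith
    rw [div_le_iff₀ hsD0, div_mul_eq_mul_div, div_mul_eq_mul_div, le_div_iff₀ hdD0]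
    nlinarith [mul_nonneg (mul_nonneg hm hsd0) (sub_nonneg.2 hdD), hsD2,
      mul_nonneg hm hsd0]
  exact le_trans (le_trans (step1.trans_eq hKeq) step2) hc1

lemma aux_final1 {A B d D sd sD m' X Y : ℝ} (hA : 0 < A) (hB : 0 < B) (hd : 0 < d) (hD : 0 < D)
    (hsd2 : sd ^ 2 = d) (hsD2 : sD ^ 2 = D) (hsd0 : 0 ≤ sd) (hsD0 : 0 < sD) (hdD : d ≤ D)
    (hm : 0 ≤ m') (hcmp : (A ^ 2 + B ^ 2) * (d * D) ≤ (d ^ 2 + D ^ 2) * (A * B))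
    (hX : X ≤ m' * (A ^ 2 + B ^ 2) / (2 * (A * B)))
    (hc1 : 2 * (sd * sD) / (d + D) * m' ≤ Y) :
    2 * sD * (d * sd) / (D ^ 2 + d ^ 2) * X ≤ Y := by
  have hK0 : 0 ≤ 2 * sD * (d * sd) / (D ^ 2 + d ^ 2) := by positivity
  have step1 : 2 * sD * (d * sd) / (D ^ 2 + d ^ 2) * X ≤
      2 * sD * (d * sd) / (D ^ 2 + d ^ 2) * (m' * (A ^ 2 + B ^ 2) / (2 * (A * B))) :=
    mul_le_mul_of_nonneg_left hX hK0
  have step2 : 2 * sD * (d * sd) / (D ^ 2 + d ^ 2) * (m' * (A ^ 2 + B ^ 2) / (2 * (A * B))) ≤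
      2 * (sd * sD) / (d + D) * m' := by
    have hdD0 : 0 < d + D := by linarith
    rw [div_mul_div_comm, div_mul_eq_mul_div, div_le_div_iff₀ (by positivity) (by positivity)]
    have h1 : d * (A ^ 2 + B ^ 2) * (d + D) ≤ 2 * ((d ^ 2 + D ^ 2) * (A * B)) := by
      nlinarith [hcmp, mul_nonneg (mul_nonneg hd.le
        (by positivity : (0:ℝ) ≤ A ^ 2 + B ^ 2)) (sub_nonneg.2 hdD)]
    nlinarith [mul_le_mul_of_nonneg_left h1 (by positivity : (0:ℝ) ≤ 2 * m' * sd * sD)]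
  exact le_trans (step1.trans step2) hc1

lemma edge_prop (G : SimpleGraph V) [Fintype V] [DecidableRel G.Adj]
    {P : Sym2 V → Prop} (h : ∀ u v, G.Adj u v → P s(u, v)) :
    ∀ e ∈ G.edgeFinset, P e := by
  intro e
  induction e using Sym2.ind with
  | _ u v => exact fun he => h u v (by simpa [SimpleGraph.mem_edgeFinset] using he)

lemma edgeSum_le_edgeSum (G : SimpleGraph V) [Fintype V] [DecidableRel G.Adj]
    (f g : ℝ → ℝ → ℝ) (hf : ∀ a b, f a b = f b a) (hg : ∀ a b, g a b = g b a)
    (h : ∀ u v, G.Adj u v → f (G.degree u) (G.degree v) ≤ g (G.degree u) (G.degree v)) :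
    edgeSum G f hf ≤ edgeSum G g hg := by
  refine Finset.sum_le_sum (edge_prop G ?_)
  intro u v huv
  simpa [Sym2.lift_mk] using h u v huv

lemma edgeSum_congr (G : SimpleGraph V) [Fintype V] [DecidableRel G.Adj]
    (f g : ℝ → ℝ → ℝ) (hf : ∀ a b, f a b = f b a) (hg : ∀ a b, g a b = g b a)
    (h : ∀ u v, G.Adj u v → f (G.degree u) (G.degree v) = g (G.degree u) (G.degree v)) :
    edgeSum G f hf = edgeSum G g hg := by
  refine Finset.sum_congr rfl (edge_prop G ?_)
  intro u v huv
  simpa [Sym2.lift_mk] using h u v huv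

lemma edgeSum_const (G : SimpleGraph V) [Fintype V] [DecidableRel G.Adj] (c : ℝ) :
    edgeSum G (fun _ _ => c) (fun _ _ => rfl) = (G.edgeFinset.card : ℝ) * c := by
  unfold edgeSum
  rw [Finset.sum_congr rfl (fun e _ => ?_), Finset.sum_const, nsmul_eq_mul]
  induction e using Sym2.ind with
  | _ u v => simp [Sym2.lift_mk]

lemma edgeSum_add (G : SimpleGraph V) [Fintype V] [DecidableRel G.Adj]
    (f g : ℝ → ℝ → ℝ) (hf : ∀ a b, f a b = f b a) (hg : ∀ a b, g a b = g b a) :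
    edgeSum G (fun x y => f x y + g x y) (fun a b => by rw [hf a b, hg a b]) =
      edgeSum G f hf + edgeSum G g hg := by
  unfold edgeSum
  rw [← Finset.sum_add_distrib]
  refine Finset.sum_congr rfl (fun e _ => ?_)
  induction e using Sym2.ind with
  | _ u v => simp [Sym2.lift_mk]

lemma edgeSum_smul (G : SimpleGraph V) [Fintype V] [DecidableRel G.Adj] (c : ℝ)
    (f : ℝ → ℝ → ℝ) (hf : ∀ a b, f a b = f b a) :
    edgeSum G (fun x y => c * f x y) (fun a b => by rw [hf a b]) =
      c * edgeSum G f hf := by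
  unfold edgeSum
  rw [Finset.mul_sum]
  refine Finset.sum_congr rfl (fun e _ => ?_)
  induction e using Sym2.ind with
  | _ u v => simp [Sym2.lift_mk]

-- Cauchy-Schwarz at edgeSum level
lemma card_sq_le_edgeSum_mul (G : SimpleGraph V) [Fintype V] [DecidableRel G.Adj]
    (f g : ℝ → ℝ → ℝ) (hf : ∀ a b, f a b = f b a) (hg : ∀ a b, g a b = g b a)
    (h0 : ∀ u v, G.Adj u v → 0 < f (G.degree u) (G.degree v))
    (h1 : ∀ u v, G.Adj u v → f (G.degree u) (G.degree v) * g (G.degree u) (G.degree v) = 1) :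
    ((G.edgeFinset.card : ℝ)) ^ 2 ≤ edgeSum G f hf * edgeSum G g hg := by
  classical
  set F : Sym2 V → ℝ :=
    fun e => Sym2.lift ⟨fun u v => f (G.degree u) (G.degree v), fun u v => hf _ _⟩ e with hF
  set Gg : Sym2 V → ℝ :=
    fun e => Sym2.lift ⟨fun u v => g (G.degree u) (G.degree v), fun u v => hg _ _⟩ e with hGg
  have key := Finset.sum_mul_sq_le_sq_mul_sq G.edgeFinset
    (fun e => Real.sqrt (F e)) (fun e => Real.sqrt (Gg e))
  have e1 : ∑ e ∈ G.edgeFinset, Real.sqrt (F e) * Real.sqrt (Gg e) = (G.edgeFinset.card : ℝ) := by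
    rw [Finset.sum_congr rfl (edge_prop G (P := fun e => Real.sqrt (F e) * Real.sqrt (Gg e) = 1)
      ?_), Finset.sum_const, nsmul_eq_mul, mul_one]
    intro u v huv
    rw [hF, hGg]
    simp only [Sym2.lift_mk]
    rw [← Real.sqrt_mul (h0 u v huv).le, h1 u v huv, Real.sqrt_one]
  have e2 : ∑ e ∈ G.edgeFinset, Real.sqrt (F e) ^ 2 = edgeSum G f hf := by
    refine Finset.sum_congr rfl (edge_prop G ?_)
    intro u v huv
    simp only [hF, Sym2.lift_mk]
    exact Real.sq_sqrt (h0 u v huv).le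
  have e3 : ∑ e ∈ G.edgeFinset, Real.sqrt (Gg e) ^ 2 = edgeSum G g hg := by
    refine Finset.sum_congr rfl (edge_prop G ?_)
    intro u v huv
    simp only [hGg, Sym2.lift_mk]
    refine Real.sq_sqrt ?_
    have hfp := h0 u v huv
    have := h1 u v huv
    nlinarith
  rw [e1, e2, e3] at key
  exact key

-- if edgeSum f = card and each term ≤ 1 then each term = 1
lemma edgeSum_eq_card_forall (G : SimpleGraph V) [Fintype V] [DecidableRel G.Adj]
    (f : ℝ → ℝ → ℝ) (hf : ∀ a b, f a b = f b a)
    (hle : ∀ u v, G.Adj u v → f (G.degree u) (G.degree v) ≤ 1)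
    (hsum : edgeSum G f hf = (G.edgeFinset.card : ℝ)) :
    ∀ u v, G.Adj u v → f (G.degree u) (G.degree v) = 1 := by
  classical
  set F : Sym2 V → ℝ :=
    fun e => Sym2.lift ⟨fun u v => f (G.degree u) (G.degree v), fun u v => hf _ _⟩ e with hF
  have hzero : ∑ e ∈ G.edgeFinset, (1 - F e) = 0 := by
    rw [Finset.sum_sub_distrib, Finset.sum_const, nsmul_eq_mul, mul_one]
    have : ∑ e ∈ G.edgeFinset, F e = (G.edgeFinset.card : ℝ) := hsum
    rw [this, sub_self]
  have hnn : ∀ e ∈ G.edgeFinset, 0 ≤ 1 - F e := by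
    refine edge_prop G ?_
    intro u v huv
    simp only [hF, Sym2.lift_mk, sub_nonneg]
    exact hle u v huv
  have hall := (Finset.sum_eq_zero_iff_of_nonneg hnn).mp hzero
  intro u v huv
  have hmem : s(u, v) ∈ G.edgeFinset := by simpa [SimpleGraph.mem_edgeFinset] using huv
  have := hall _ hmem
  simp only [hF, Sym2.lift_mk] at this
  linarith

lemma reachable_degree_eq (G : SimpleGraph V) [Fintype V] [DecidableRel G.Adj]
    (h : ∀ u v, G.Adj u v → G.degree u = G.degree v) {u w : V} (p : G.Walk u w) :
    G.degree u = G.degree w := by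
  induction p with
  | nil => rfl
  | cons hadj _ ih => exact (h _ _ hadj).trans ih


set_option maxHeartbeats 2000000 in
theorem stmt18 (G : SimpleGraph V) [Fintype V] [DecidableRel G.Adj]
    (hc : G.Connected) (hm : G.edgeFinset.Nonempty) (α : ℝ) (hα : 0 < α) :
    GA1 G ≤ Real.sqrt (genRandic G α * genRandic G (-α)) ∧
    (GraphRegular G → GA1 G = Real.sqrt (genRandic G α * genRandic G (-α))) ∧
    (GA1 G = Real.sqrt (genRandic G α * genRandic G (-α)) → GraphRegular G) ∧
    (α ≤ 1 →
      2 * (G.maxDegree : ℝ) ^ ((1 : ℝ) / 2) * (G.minDegree : ℝ) ^ ((3 : ℝ) / 2) /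
          ((G.maxDegree : ℝ) ^ 2 + (G.minDegree : ℝ) ^ 2) *
        Real.sqrt (genRandic G α * genRandic G (-α)) ≤ GA1 G) ∧
    (1 ≤ α →
      2 * (G.maxDegree : ℝ) ^ (α - 1 / 2) * (G.minDegree : ℝ) ^ (α + 1 / 2) /
          ((G.maxDegree : ℝ) ^ (2 * α) + (G.minDegree : ℝ) ^ (2 * α)) *
        Real.sqrt (genRandic G α * genRandic G (-α)) ≤ GA1 G) := by
  classical
  obtain ⟨e0, he0⟩ := hm.exists_mem
  obtain ⟨a, b, hab⟩ : ∃ a b : V, G.Adj a b := by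
    induction e0 using Sym2.ind with
    | _ a b => exact ⟨a, b, by simpa [SimpleGraph.mem_edgeFinset] using he0⟩
  haveI : Nonempty V := ⟨a⟩
  have hnbr : ∀ v : V, ∃ w, G.Adj v w := by
    intro v
    by_cases hva : v = a
    · exact ⟨b, hva ▸ hab⟩
    · obtain ⟨p⟩ := hc.preconnected v a
      cases p with
      | nil => exact absurd rfl hva
      | cons h _ => exact ⟨_, h⟩
  have hdeg1 : ∀ v : V, 1 ≤ G.degree v := fun v =>
    (G.degree_pos_iff_exists_adj v).2 (hnbr v)
  have hdeg1R : ∀ v : V, (1 : ℝ) ≤ (G.degree v : ℝ) := fun v => by exact_mod_cast hdeg1 v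
  have hdeg0R : ∀ v : V, (0 : ℝ) < (G.degree v : ℝ) := fun v =>
    lt_of_lt_of_le zero_lt_one (hdeg1R v)
  obtain ⟨m, hm_def⟩ : ∃ x : ℝ, (G.edgeFinset.card : ℝ) = x := ⟨_, rfl⟩
  obtain ⟨S, hS_def⟩ : ∃ x : ℝ, genRandic G α = x := ⟨_, rfl⟩
  obtain ⟨T, hT_def⟩ : ∃ x : ℝ, genRandic G (-α) = x := ⟨_, rfl⟩
  obtain ⟨d, hd_def⟩ : ∃ x : ℝ, ((G.minDegree : ℝ)) = x := ⟨_, rfl⟩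
  obtain ⟨D, hD_def⟩ : ∃ x : ℝ, ((G.maxDegree : ℝ)) = x := ⟨_, rfl⟩
  rw [hS_def, hT_def, hd_def, hD_def]
  have hm0 : 0 < m := by
    have h : 0 < G.edgeFinset.card := Finset.card_pos.2 ⟨e0, he0⟩
    rw [← hm_def]
    exact_mod_cast h
  -- GA1 ≤ m
  have hGA_le_m : GA1 G ≤ m := by
    have h1 : GA1 G ≤ edgeSum G (fun _ _ => (1:ℝ)) (fun _ _ => rfl) := by
      refine edgeSum_le_edgeSum G _ _ _ _ ?_
      intro u v huv
      exact aux_term_le_one (hdeg0R u) (hdeg0R v)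
    have h2 : edgeSum G (fun _ _ => (1:ℝ)) (fun _ _ => rfl) = m := by
      rw [edgeSum_const, mul_one, hm_def]
    linarith
  -- m ≤ √(S T)
  have hcs : m ^ 2 ≤ S * T := by
    rw [← hS_def, ← hT_def, ← hm_def]
    unfold genRandic
    refine card_sq_le_edgeSum_mul G _ _ _ _ ?_ ?_
    · intro u v huv
      exact Real.rpow_pos_of_pos (mul_pos (hdeg0R u) (hdeg0R v)) α
    · intro u v huv
      have hxy : (0:ℝ) < (G.degree u : ℝ) * (G.degree v : ℝ) := mul_pos (hdeg0R u) (hdeg0R v)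
      rw [← Real.rpow_add hxy, add_neg_cancel, Real.rpow_zero]
  have hST0 : 0 ≤ S * T := le_trans (sq_nonneg m) hcs
  have hm_le : m ≤ Real.sqrt (S * T) := (Real.le_sqrt hm0.le hST0).2 hcs
  -- min/max degree setup
  have hd1 : (1:ℝ) ≤ d := by
    rw [← hd_def]
    exact_mod_cast G.le_minDegree_of_forall_le_degree 1 hdeg1
  have hd0 : (0:ℝ) < d := lt_of_lt_of_le zero_lt_one hd1
  have hdD : d ≤ D := by
    rw [← hd_def, ← hD_def]
    exact_mod_cast (G.minDegree_le_degree a).trans (G.degree_le_maxDegree a)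
  have hD0 : (0:ℝ) < D := lt_of_lt_of_le hd0 hdD
  have hdb1 : ∀ v : V, d ≤ (G.degree v : ℝ) := fun v => by
    rw [← hd_def]; exact_mod_cast G.minDegree_le_degree v
  have hdb2 : ∀ v : V, (G.degree v : ℝ) ≤ D := fun v => by
    rw [← hD_def]; exact_mod_cast G.degree_le_maxDegree v
  -- GA1 lower bound via min term
  have hc1m : 2 * Real.sqrt (d * D) / (d + D) * m ≤ GA1 G := by
    have h1 : edgeSum G (fun _ _ => 2 * Real.sqrt (d * D) / (d + D)) (fun _ _ => rfl) ≤ GA1 G := by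
      unfold GA1
      exact edgeSum_le_edgeSum G _ _ _ _
        (fun u v _ => aux_term_lb hd0 (hdb1 u) (hdb2 u) (hdb1 v) (hdb2 v))
    rw [edgeSum_const] at h1
    calc 2 * Real.sqrt (d * D) / (d + D) * m
        = (G.edgeFinset.card : ℝ) * (2 * Real.sqrt (d * D) / (d + D)) := by
          rw [← hm_def]; ring
      _ ≤ GA1 G := h1
  -- rpow bounds on the Randic terms
  have hA0 : (0:ℝ) < d ^ α := Real.rpow_pos_of_pos hd0 α
  have hB0 : (0:ℝ) < D ^ α := Real.rpow_pos_of_pos hD0 α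
  have hAB : d ^ α ≤ D ^ α := Real.rpow_le_rpow hd0.le hdD hα.le
  have hp_lb : ∀ u v : V, G.Adj u v →
      (d ^ α) ^ 2 ≤ ((G.degree u : ℝ) * (G.degree v : ℝ)) ^ α := by
    intro u v _
    have h1 : (d * d) ^ α ≤ ((G.degree u : ℝ) * (G.degree v : ℝ)) ^ α :=
      Real.rpow_le_rpow (by positivity)
        (mul_le_mul (hdb1 u) (hdb1 v) hd0.le (hdeg0R u).le) hα.le
    rwa [Real.mul_rpow hd0.le hd0.le, ← sq] at h1
  have hp_ub : ∀ u v : V, G.Adj u v →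
      ((G.degree u : ℝ) * (G.degree v : ℝ)) ^ α ≤ (D ^ α) ^ 2 := by
    intro u v _
    have h1 : ((G.degree u : ℝ) * (G.degree v : ℝ)) ^ α ≤ (D * D) ^ α :=
      Real.rpow_le_rpow (by positivity)
        (mul_le_mul (hdb2 u) (hdb2 v) (hdeg0R v).le hD0.le) hα.le
    rwa [Real.mul_rpow hD0.le hD0.le, ← sq] at h1
  -- nonnegativity of S, T
  have hS0 : 0 ≤ S := by
    rw [← hS_def]
    unfold genRandic
    have h := edgeSum_le_edgeSum G (fun _ _ => (0:ℝ)) (fun x y => (x * y) ^ α)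
      (fun _ _ => rfl) (fun a b => by rw [mul_comm a b])
      (fun u v _ => (Real.rpow_pos_of_pos (mul_pos (hdeg0R u) (hdeg0R v)) α).le)
    rwa [edgeSum_const, mul_zero] at h
  have hT0 : 0 ≤ T := by
    rw [← hT_def]
    unfold genRandic
    have h := edgeSum_le_edgeSum G (fun _ _ => (0:ℝ)) (fun x y => (x * y) ^ (-α))
      (fun _ _ => rfl) (fun a b => by rw [mul_comm a b])
      (fun u v _ => (Real.rpow_pos_of_pos (mul_pos (hdeg0R u) (hdeg0R v)) (-α)).le)
    rwa [edgeSum_const, mul_zero] at h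
  -- Kantorovich-type bound
  have hSub : S + (d ^ α) ^ 2 * (D ^ α) ^ 2 * T ≤ m * ((d ^ α) ^ 2 + (D ^ α) ^ 2) := by
    rw [← hS_def, ← hT_def]
    unfold genRandic edgeSum
    rw [Finset.mul_sum, ← Finset.sum_add_distrib]
    refine le_trans (Finset.sum_le_sum (g := fun _ => (d ^ α) ^ 2 + (D ^ α) ^ 2)
      (edge_prop G ?_)) ?_
    · intro u v huv
      simp only [Sym2.lift_mk]
      rw [Real.rpow_neg (by positivity : (0:ℝ) ≤ (G.degree u : ℝ) * (G.degree v : ℝ))]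
      exact aux_kant (pow_pos hA0 2) (hp_lb u v huv) (hp_ub u v huv)
    · rw [Finset.sum_const, nsmul_eq_mul, hm_def]
  have hsqrtST : Real.sqrt (S * T) ≤
      m * ((d ^ α) ^ 2 + (D ^ α) ^ 2) / (2 * (d ^ α * D ^ α)) := by
    have hc0 : (0:ℝ) ≤ (d ^ α) ^ 2 * (D ^ α) ^ 2 * T :=
      mul_nonneg (by positivity) hT0
    have hsq4 : 4 * ((d ^ α) ^ 2 * (D ^ α) ^ 2) * (S * T) ≤
        (m * ((d ^ α) ^ 2 + (D ^ α) ^ 2)) ^ 2 := by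
      nlinarith [sq_nonneg (S - (d ^ α) ^ 2 * (D ^ α) ^ 2 * T), hSub, hS0, hc0]
    have h1 : S * T ≤ (m * ((d ^ α) ^ 2 + (D ^ α) ^ 2) / (2 * (d ^ α * D ^ α))) ^ 2 := by
      rw [div_pow, le_div_iff₀ (by positivity)]
      nlinarith [hsq4]
    calc Real.sqrt (S * T)
        ≤ Real.sqrt ((m * ((d ^ α) ^ 2 + (D ^ α) ^ 2) / (2 * (d ^ α * D ^ α))) ^ 2) :=
          Real.sqrt_le_sqrt h1
      _ = m * ((d ^ α) ^ 2 + (D ^ α) ^ 2) / (2 * (d ^ α * D ^ α)) :=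
          Real.sqrt_sq (by positivity)
  have hc1m' : 2 * (Real.sqrt d * Real.sqrt D) / (d + D) * m ≤ GA1 G := by
    rw [← Real.sqrt_mul hd0.le]
    exact hc1m
  refine ⟨hGA_le_m.trans hm_le, ?_, ?_, ?_, ?_⟩
  · -- regular → equality
    rintro ⟨k, hk⟩
    have hk1 : (1:ℝ) ≤ (k:ℝ) := by
      have := hdeg1 a
      rw [hk a] at this
      exact_mod_cast this
    have hk0 : (0:ℝ) < (k:ℝ) := lt_of_lt_of_le zero_lt_one hk1
    have hGA : GA1 G = m := by
      have : GA1 G = edgeSum G (fun _ _ => (1:ℝ)) (fun _ _ => rfl) := by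
        refine edgeSum_congr G _ _ _ _ ?_
        intro u v huv
        rw [hk u, hk v]
        have hkne : (k:ℝ) + (k:ℝ) ≠ 0 := by positivity
        rw [Real.sqrt_mul_self hk0.le, div_eq_one_iff_eq hkne]
        ring
      rw [this, edgeSum_const, mul_one, hm_def]
    have hSc : S = m * ((k:ℝ) * (k:ℝ)) ^ α := by
      rw [← hS_def]
      unfold genRandic
      rw [edgeSum_congr G _ (fun _ _ => ((k:ℝ) * (k:ℝ)) ^ α) _ (fun _ _ => rfl)
        (fun u v huv => by rw [hk u, hk v]), edgeSum_const, hm_def]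
    have hTc : T = m * ((k:ℝ) * (k:ℝ)) ^ (-α) := by
      rw [← hT_def]
      unfold genRandic
      rw [edgeSum_congr G _ (fun _ _ => ((k:ℝ) * (k:ℝ)) ^ (-α)) _ (fun _ _ => rfl)
        (fun u v huv => by rw [hk u, hk v]), edgeSum_const, hm_def]
    have hprod : S * T = m ^ 2 := by
      rw [hSc, hTc]
      have : ((k:ℝ) * (k:ℝ)) ^ α * ((k:ℝ) * (k:ℝ)) ^ (-α) = 1 := by
        rw [← Real.rpow_add (mul_pos hk0 hk0), add_neg_cancel, Real.rpow_zero]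
      have h2 : m * ((k:ℝ) * (k:ℝ)) ^ α * (m * ((k:ℝ) * (k:ℝ)) ^ (-α)) =
          m ^ 2 * (((k:ℝ) * (k:ℝ)) ^ α * ((k:ℝ) * (k:ℝ)) ^ (-α)) := by ring
      rw [h2, this, mul_one]
    rw [hprod, Real.sqrt_sq hm0.le, hGA]
  · -- equality → regular
    intro heq
    have hGAm : GA1 G = m := le_antisymm hGA_le_m (by rw [← heq] at hm_le; exact hm_le)
    have hall : ∀ u v, G.Adj u v →
        2 * Real.sqrt ((G.degree u : ℝ) * (G.degree v : ℝ)) /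
          ((G.degree u : ℝ) + (G.degree v : ℝ)) = 1 := by
      refine edgeSum_eq_card_forall G (fun x y => 2 * Real.sqrt (x * y) / (x + y))
        (fun a b => by rw [mul_comm a b, add_comm a b]) ?_ ?_
      swap
      · have h := hGAm
        unfold GA1 at h
        rw [h, ← hm_def]
      intro u v huv
      exact aux_term_le_one (hdeg0R u) (hdeg0R v)
    have hdeq : ∀ u v, G.Adj u v → G.degree u = G.degree v := by
      intro u v huv
      have := aux_term_eq_one (hdeg0R u) (hdeg0R v) (hall u v huv)
      exact_mod_cast this
    refine ⟨G.degree a, fun v => ?_⟩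
    obtain ⟨p⟩ := hc.preconnected v a
    exact reachable_degree_eq G hdeq p
  · -- 0 < α ≤ 1
    intro hα1
    have hD12 : D ^ ((1:ℝ) / 2) = Real.sqrt D := (Real.sqrt_eq_rpow D).symm
    have hd32 : d ^ ((3:ℝ) / 2) = d * Real.sqrt d := by
      rw [show ((3:ℝ) / 2) = 1 + 1 / 2 by norm_num, Real.rpow_add hd0, Real.rpow_one,
        ← Real.sqrt_eq_rpow]
    rw [hD12, hd32]
    have hABd : D ^ α * d ≤ d ^ α * D := by
      have h1 : (1:ℝ) ≤ D / d := (one_le_div hd0).2 hdD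
      have h2 := Real.rpow_le_rpow_of_exponent_le h1 hα1
      rw [Real.rpow_one, Real.div_rpow hD0.le hd0.le] at h2
      rw [div_le_div_iff₀ hA0 hd0] at h2
      linarith [h2]
    have hABD : d ^ α * d ≤ D ^ α * D := mul_le_mul hAB hdD hd0.le hB0.le
    have hcmp : ((d ^ α) ^ 2 + (D ^ α) ^ 2) * (d * D) ≤ (d ^ 2 + D ^ 2) * (d ^ α * D ^ α) := by
      nlinarith [mul_nonneg (sub_nonneg.2 hABd) (sub_nonneg.2 hABD)]
    exact aux_final1 hA0 hB0 hd0 hD0 (Real.sq_sqrt hd0.le) (Real.sq_sqrt hD0.le)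
      (Real.sqrt_nonneg d) (Real.sqrt_pos.2 hD0) hdD hm0.le hcmp hsqrtST hc1m'
  · -- α ≥ 1
    intro hα1
    have hDa : D ^ (α - 1 / 2) = D ^ α / Real.sqrt D := by
      rw [Real.rpow_sub hD0, ← Real.sqrt_eq_rpow]
    have hda : d ^ (α + 1 / 2) = d ^ α * Real.sqrt d := by
      rw [Real.rpow_add hd0, ← Real.sqrt_eq_rpow]
    have h2D : D ^ (2 * α) = (D ^ α) ^ 2 := by
      rw [two_mul, Real.rpow_add hD0, sq]
    have h2d : d ^ (2 * α) = (d ^ α) ^ 2 := by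
      rw [two_mul, Real.rpow_add hd0, sq]
    rw [hDa, hda, h2D, h2d]
    exact aux_final2 hA0 hB0 hd0 hD0 (Real.sq_sqrt hd0.le) (Real.sq_sqrt hD0.le)
      (Real.sqrt_nonneg d) (Real.sqrt_pos.2 hD0) hdD hm0.le hsqrtST hc1m'
end

section
/- For any graph G with m edges and any real α ≠ 0, R_α(G) ≥ m·(NK*(G))^{α/m}, with equality if and only if the product d_u·d_v has the same value for every edge uv of G. -/
open Finset Real

variable {V : Type*}

lemma amgm_eq {ι : Type*} (s : Finset ι) (hs : s.Nonempty) (f : ι → ℝ)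
    (hf : ∀ i ∈ s, 0 < f i) :
    (s.card : ℝ) * (∏ i ∈ s, f i) ^ ((s.card : ℝ)⁻¹) ≤ ∑ i ∈ s, f i ∧
    (∑ i ∈ s, f i = (s.card : ℝ) * (∏ i ∈ s, f i) ^ ((s.card : ℝ)⁻¹) ↔
      ∀ i ∈ s, ∀ j ∈ s, f i = f j) := by
  have hm : (0:ℝ) < s.card := by exact_mod_cast Finset.card_pos.2 hs
  set m : ℝ := (s.card : ℝ) with hmdef
  have hw : ∑ _i ∈ s, m⁻¹ = 1 := by
    rw [Finset.sum_const, nsmul_eq_mul, mul_inv_cancel₀ hm.ne']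
  have key : (∏ i ∈ s, f i) ^ m⁻¹ = ∏ i ∈ s, f i ^ m⁻¹ :=
    (Real.finset_prod_rpow s f (fun i hi => (hf i hi).le) _).symm
  have key2 : ∏ i ∈ s, f i ^ m⁻¹ = Real.exp (∑ i ∈ s, m⁻¹ * Real.log (f i)) := by
    rw [Real.exp_sum]
    refine Finset.prod_congr rfl fun i hi => ?_
    rw [Real.rpow_def_of_pos (hf i hi), mul_comm]
  have hineq : ∏ i ∈ s, f i ^ m⁻¹ ≤ ∑ i ∈ s, m⁻¹ * f i :=
    Real.geom_mean_le_arith_mean_weighted s (fun _ => m⁻¹) f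
      (fun _ _ => (inv_pos.2 hm).le) hw (fun i hi => (hf i hi).le)
  have hsum : ∑ i ∈ s, m⁻¹ * f i = m⁻¹ * ∑ i ∈ s, f i := by rw [Finset.mul_sum]
  constructor
  · rw [key]
    calc m * ∏ i ∈ s, f i ^ m⁻¹ ≤ m * ∑ i ∈ s, m⁻¹ * f i :=
          mul_le_mul_of_nonneg_left hineq hm.le
      _ = ∑ i ∈ s, f i := by rw [hsum, ← mul_assoc, mul_inv_cancel₀ hm.ne', one_mul]
  · constructor
    · intro heq
      have jensen := strictConvexOn_exp.map_sum_eq_iff (t := s)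
        (w := fun _ => m⁻¹) (p := fun i => Real.log (f i))
        (fun _ _ => inv_pos.2 hm) hw (fun _ _ => Set.mem_univ _)
      have hL : Real.exp (∑ i ∈ s, m⁻¹ • Real.log (f i)) =
          ∑ i ∈ s, m⁻¹ • Real.exp (Real.log (f i)) := by
        simp only [smul_eq_mul, ← key2, key.symm]
        rw [show (∑ i ∈ s, m⁻¹ * Real.exp (Real.log (f i))) = ∑ i ∈ s, m⁻¹ * f i from
          Finset.sum_congr rfl fun i hi => by rw [Real.exp_log (hf i hi)]]
        rw [hsum, heq, ← mul_assoc, inv_mul_cancel₀ hm.ne', one_mul]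
      have hconst := jensen.1 hL
      intro i hi j hj
      have := (hconst i hi).trans (hconst j hj).symm
      have := congrArg Real.exp this
      rwa [Real.exp_log (hf i hi), Real.exp_log (hf j hj)] at this
    · intro hcst
      obtain ⟨i₀, hi₀⟩ := hs
      have h1 : ∑ i ∈ s, f i = m * f i₀ := by
        rw [Finset.sum_congr rfl fun i hi => hcst i hi i₀ hi₀, Finset.sum_const,
          nsmul_eq_mul]
      have h2 : ∏ i ∈ s, f i = f i₀ ^ (s.card : ℕ) := by
        rw [Finset.prod_congr rfl fun i hi => hcst i hi i₀ hi₀, Finset.prod_const]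
      rw [h1, h2, ← Real.rpow_natCast (f i₀) s.card, ← Real.rpow_mul (hf i₀ hi₀).le,
        mul_inv_cancel₀ hm.ne', Real.rpow_one]

theorem stmt19 (G : SimpleGraph V) [Fintype V] [DecidableRel G.Adj]
    (hc : G.Connected) (hm : G.edgeFinset.Nonempty) (α : ℝ) (hα0 : α ≠ 0) :
    (G.edgeFinset.card : ℝ) * NKstar G ^ (α / (G.edgeFinset.card : ℝ)) ≤ genRandic G α ∧
    (genRandic G α = (G.edgeFinset.card : ℝ) * NKstar G ^ (α / (G.edgeFinset.card : ℝ)) ↔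
      ∃ c : ℕ, ∀ u v : V, G.Adj u v → G.degree u * G.degree v = c) := by
  classical
  set D : Sym2 V → ℝ :=
    Sym2.lift ⟨fun u v => ((G.degree u : ℝ) * (G.degree v : ℝ)), fun u v => mul_comm _ _⟩
    with hD
  have hDpos : ∀ e ∈ G.edgeFinset, 0 < D e := by
    intro e he
    induction e using Sym2.ind with
    | _ u v =>
      rw [SimpleGraph.mem_edgeFinset, SimpleGraph.mem_edgeSet] at he
      have hu : 0 < G.degree u := by
        rw [SimpleGraph.degree_pos_iff_exists_adj]; exact ⟨v, he⟩
      have hv : 0 < G.degree v := by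
        rw [SimpleGraph.degree_pos_iff_exists_adj]; exact ⟨u, he.symm⟩
      simp only [hD, Sym2.lift_mk]
      positivity
  have hgen : genRandic G α = ∑ e ∈ G.edgeFinset, D e ^ α := by
    refine Finset.sum_congr rfl fun e he => ?_
    induction e using Sym2.ind with
    | _ u v => simp [hD]
  have hprod : ∏ e ∈ G.edgeFinset, D e ^ α = NKstar G ^ α :=
    Real.finset_prod_rpow _ _ (fun e he => (hDpos e he).le) α
  have hNK : NKstar G = ∏ e ∈ G.edgeFinset, D e := rfl
  have hNKpos : 0 < NKstar G := by
    rw [hNK]; exact Finset.prod_pos hDpos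
  have hfpos : ∀ e ∈ G.edgeFinset, 0 < D e ^ α :=
    fun e he => Real.rpow_pos_of_pos (hDpos e he) α
  obtain ⟨hle, hiff⟩ := amgm_eq G.edgeFinset hm (fun e => D e ^ α) hfpos
  rw [hprod] at hle hiff
  have hexp : NKstar G ^ (α / (G.edgeFinset.card : ℝ)) =
      (NKstar G ^ α) ^ ((G.edgeFinset.card : ℝ)⁻¹) := by
    rw [← Real.rpow_mul hNKpos.le, div_eq_mul_inv]
  rw [hgen, hexp]
  refine ⟨hle, hiff.trans ?_⟩
  have hinj : ∀ a b : ℝ, 0 < a → 0 < b → a ^ α = b ^ α → a = b := by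
    intro a b ha hb h
    have := congrArg (· ^ α⁻¹) h
    simpa [← Real.rpow_natCast, ← Real.rpow_mul ha.le, ← Real.rpow_mul hb.le,
      mul_inv_cancel₀ hα0] using this
  constructor
  · intro h
    obtain ⟨e₀, he₀⟩ := hm
    induction e₀ using Sym2.ind with
    | _ u₀ v₀ =>
      refine ⟨G.degree u₀ * G.degree v₀, fun u v huv => ?_⟩
      have hmem : s(u, v) ∈ G.edgeFinset := by
        rw [SimpleGraph.mem_edgeFinset, SimpleGraph.mem_edgeSet]; exact huv
      have := hinj _ _ (hDpos _ hmem) (hDpos _ he₀) (h _ hmem _ he₀)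
      simp only [hD, Sym2.lift_mk] at this
      exact_mod_cast this
  · rintro ⟨c, hc'⟩
    have hval : ∀ e ∈ G.edgeFinset, D e = (c : ℝ) := by
      intro e he
      induction e using Sym2.ind with
      | _ u v =>
        rw [SimpleGraph.mem_edgeFinset, SimpleGraph.mem_edgeSet] at he
        simp only [hD, Sym2.lift_mk]
        exact_mod_cast congrArg (Nat.cast : ℕ → ℝ) (hc' u v he)
    intro i hi j hj
    rw [hval i hi, hval j hj]
end
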